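/- arXiv:1711.07872 — 15 statements merged into one kernel-verified Lean document; each statement's English description precedes it below -/
import Mathlib

section
/- Let H be a finite simple connected graph on h ≥ 1 vertices. Then the sum, over all vertex covers C of H, of 2^{comp(H[C])} is at most 3 · 2^{h−1}, where H[C] denotes the subgraph of H induced by C and comp denotes the number of connected components of a graph (with the convention that the empty graph has 0 components). -/
set_option linter.unusedSectionVars false

namespace Stmt0Aux

open SimpleGraph

variable {V : Type*} [Fintype V] [DecidableEq V] (H : SimpleGraph V) [DecidableRel H.Adj]

instance instDecInduce (s : Set V) : DecidableRel (H.induce s).Adj :=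
  fun a b => decidable_of_iff (H.Adj ↑a ↑b) (by simp)

/-- A valid 3-coloring: colors 0,1 are "A"/"B" sides, color 2 is the independent set. -/
def Valid (f : V → Fin 3) : Prop :=
  ∀ u v : V, H.Adj u v → (f u = 2 → f v ≠ 2) ∧ (f u ≠ 2 → f v ≠ 2 → f u = f v)

instance : DecidablePred (Valid H) := fun f => by unfold Valid; infer_instance

/-- From a vertex cover `C` and a choice of bit per component of `H[C]`, a coloring. -/
def F (a : Σ C : Finset V, ((H.induce (↑C : Set V)).ConnectedComponent → Bool)) :
    V → Fin 3 :=
  fun v =>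
    if h : v ∈ a.1 then
      (if a.2 ((H.induce (↑a.1 : Set V)).connectedComponentMk ⟨v, Finset.mem_coe.mpr h⟩)
        then 0 else 1)
    else 2

lemma fin3_cases : ∀ x : Fin 3, x = 0 ∨ x = 1 ∨ x = 2 := by decide

lemma F_ne_two_iff (a : Σ C : Finset V, ((H.induce (↑C : Set V)).ConnectedComponent → Bool))
    (v : V) : F H a v ≠ 2 ↔ v ∈ a.1 := by
  unfold F
  by_cases h : v ∈ a.1
  · rw [dif_pos h]
    refine ⟨fun _ => h, fun _ => ?_⟩
    split <;> decide
  · rw [dif_neg h]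
    simp [h]

lemma walk_const {f : V → Fin 3} (hf : Valid H f) {s : Set V} (hs : ∀ v ∈ s, f v ≠ 2) :
    ∀ {x y : s} (_ : (H.induce s).Walk x y), f ↑x = f ↑y := by
  intro x y p
  induction p with
  | nil => rfl
  | @cons x z y h p ih =>
    have hadj : H.Adj ↑x ↑z := by simpa using h
    have := (hf _ _ hadj).2 (hs _ x.2) (hs _ z.2)
    rw [this, ih]

lemma F_valid (a : Σ C : Finset V, ((H.induce (↑C : Set V)).ConnectedComponent → Bool))
    (hC : ∀ u v : V, H.Adj u v → u ∈ a.1 ∨ v ∈ a.1) : Valid H (F H a) := by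
  intro u v huv
  by_cases hu : u ∈ a.1 <;> by_cases hv : v ∈ a.1
  · -- both in C: same component
    have hcomp : (H.induce (↑a.1 : Set V)).connectedComponentMk ⟨u, Finset.mem_coe.mpr hu⟩ =
        (H.induce (↑a.1 : Set V)).connectedComponentMk ⟨v, Finset.mem_coe.mpr hv⟩ :=
      SimpleGraph.ConnectedComponent.connectedComponentMk_eq_of_adj (by simpa using huv)
    have heq : F H a u = F H a v := by unfold F; rw [dif_pos hu, dif_pos hv, hcomp]
    exact ⟨fun h2 => absurd h2 ((F_ne_two_iff H a u).mpr hu),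
      fun _ _ => heq⟩
  · have h2 : F H a v = 2 := by unfold F; rw [dif_neg hv]
    exact ⟨fun h => absurd h ((F_ne_two_iff H a u).mpr hu),
      fun _ hv2 => absurd h2 hv2⟩
  · have h2 : F H a u = 2 := by unfold F; rw [dif_neg hu]
    exact ⟨fun _ => (F_ne_two_iff H a v).mpr hv, fun hu2 _ => absurd h2 hu2⟩
  · exact absurd (hC u v huv) (by simp [hu, hv])

lemma F_inj (a b : Σ C : Finset V, ((H.induce (↑C : Set V)).ConnectedComponent → Bool))
    (h : F H a = F H b) : a = b := by
  obtain ⟨C, g⟩ := a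
  obtain ⟨C', g'⟩ := b
  have hCC : C = C' := by
    ext v
    rw [← F_ne_two_iff H ⟨C, g⟩ v, ← F_ne_two_iff H ⟨C', g'⟩ v, h]
  subst hCC
  suffices hg : g = g' by rw [hg]
  funext K
  induction K using SimpleGraph.ConnectedComponent.ind with
  | _ x =>
    have hx : (x : V) ∈ C := Finset.mem_coe.mp x.2
    have hpt := congrFun h (x : V)
    unfold F at hpt
    dsimp only at hpt
    rw [dif_pos hx, dif_pos hx] at hpt
    have hmk : (⟨(x : V), Finset.mem_coe.mpr hx⟩ : (↑C : Set V)) = x := rfl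
    rw [hmk] at hpt
    by_cases h1 : g ((H.induce (↑C : Set V)).connectedComponentMk x) <;>
      by_cases h2 : g' ((H.induce (↑C : Set V)).connectedComponentMk x)
    · rw [h1, h2]
    · rw [if_pos h1, if_neg h2] at hpt; exact absurd hpt (by decide)
    · rw [if_neg h1, if_pos h2] at hpt; exact absurd hpt (by decide)
    · rw [Bool.eq_false_iff.mpr h1, Bool.eq_false_iff.mpr h2]

lemma F_surj (f : V → Fin 3) (hf : Valid H f) :
    ∃ a : Σ C : Finset V, ((H.induce (↑C : Set V)).ConnectedComponent → Bool),
      (∀ u v : V, H.Adj u v → u ∈ a.1 ∨ v ∈ a.1) ∧ F H a = f := by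
  classical
  set C : Finset V := Finset.univ.filter (fun v => f v ≠ 2) with hCdef
  have hmemC : ∀ v, v ∈ C ↔ f v ≠ 2 := by intro v; simp [hCdef]
  have hs : ∀ v ∈ (↑C : Set V), f v ≠ 2 := fun v hv => (hmemC v).mp (Finset.mem_coe.mp hv)
  set g : (H.induce (↑C : Set V)).ConnectedComponent → Bool :=
    SimpleGraph.ConnectedComponent.lift (fun x => decide (f ↑x = 0))
      (fun v w p _ => by
        show decide (f ↑v = 0) = decide (f ↑w = 0)
        rw [walk_const H hf hs p]) with hgdef
  refine ⟨⟨C, g⟩, ?_, ?_⟩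
  · intro u v huv
    by_contra hcon
    push_neg at hcon
    have hu : f u = 2 := by by_contra h; exact hcon.1 ((hmemC u).mpr h)
    have hv : f v = 2 := by by_contra h; exact hcon.2 ((hmemC v).mpr h)
    exact (hf u v huv).1 hu hv
  · funext v
    unfold F
    dsimp only
    by_cases h : v ∈ C
    · rw [dif_pos h]
      have hgv : g ((H.induce (↑C : Set V)).connectedComponentMk ⟨v, Finset.mem_coe.mpr h⟩) =
          decide (f v = 0) := rfl
      simp only [hgv]
      have hne2 : f v ≠ 2 := (hmemC v).mp h
      rcases fin3_cases (f v) with h0 | h1 | h2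
      · simp [h0]
      · simp [h1]
      · exact absurd h2 hne2
    · rw [dif_neg h]
      have : ¬ f v ≠ 2 := fun hh => h ((hmemC v).mpr hh)
      exact (not_not.mp this).symm

/-- Step 1: the sum over covers equals the number of valid colorings. -/
lemma step1 :
    ∑ C ∈ Finset.univ.filter
        (fun C : Finset V => ∀ u v : V, H.Adj u v → u ∈ C ∨ v ∈ C),
      2 ^ Nat.card (H.induce (↑C : Set V)).ConnectedComponent
    = (Finset.univ.filter (fun f : V → Fin 3 => Valid H f)).card := by
  classical
  have h1 : ∀ C : Finset V,
      (2:ℕ) ^ Nat.card (H.induce (↑C : Set V)).ConnectedComponent =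
      (Finset.univ : Finset ((H.induce (↑C : Set V)).ConnectedComponent → Bool)).card := by
    intro C
    rw [Finset.card_univ, Nat.card_eq_fintype_card, Fintype.card_fun, Fintype.card_bool]
  calc
    ∑ C ∈ Finset.univ.filter
        (fun C : Finset V => ∀ u v : V, H.Adj u v → u ∈ C ∨ v ∈ C),
      2 ^ Nat.card (H.induce (↑C : Set V)).ConnectedComponent
      = ∑ C ∈ Finset.univ.filter
        (fun C : Finset V => ∀ u v : V, H.Adj u v → u ∈ C ∨ v ∈ C),
        (Finset.univ : Finset ((H.induce (↑C : Set V)).ConnectedComponent → Bool)).card :=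
        Finset.sum_congr rfl (fun C _ => h1 C)
    _ = ((Finset.univ.filter
        (fun C : Finset V => ∀ u v : V, H.Adj u v → u ∈ C ∨ v ∈ C)).sigma
        (fun C => (Finset.univ :
          Finset ((H.induce (↑C : Set V)).ConnectedComponent → Bool)))).card :=
        (Finset.card_sigma _ _).symm
    _ = (Finset.univ.filter (fun f : V → Fin 3 => Valid H f)).card := by
        apply Finset.card_bij (fun a _ => F H a)
        · intro a ha
          rw [Finset.mem_sigma] at ha
          rw [Finset.mem_filter]
          refine ⟨Finset.mem_univ _, ?_⟩
          exact F_valid H a (by simpa using ha.1)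
        · intro a _ b _ h
          exact F_inj H a b h
        · intro f hf
          rw [Finset.mem_filter] at hf
          obtain ⟨a, ha1, ha2⟩ := F_surj H f hf.2
          exact ⟨a, Finset.mem_sigma.mpr
            ⟨Finset.mem_filter.mpr ⟨Finset.mem_univ _, ha1⟩, Finset.mem_univ _⟩, ha2⟩

/-- Encoding of a child color given its parent color. -/
def enc (x p : Fin 3) : Bool := if p = 2 then decide (x = 0) else decide (x = 2)

lemma enc_inj : ∀ p x y : Fin 3,
    ((p = 2 → x ≠ 2) ∧ (p ≠ 2 → x ≠ 2 → p = x)) →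
    ((p = 2 → y ≠ 2) ∧ (p ≠ 2 → y ≠ 2 → p = y)) →
    enc x p = enc y p → x = y := by decide

lemma exists_parent (hconn : H.Connected) {v₀ v : V} (h : v ≠ v₀) :
    ∃ u, H.Adj u v ∧ H.dist v₀ u < H.dist v₀ v := by
  obtain ⟨p, hp⟩ := hconn.exists_walk_length_eq_dist v v₀
  cases p with
  | nil => exact absurd rfl h
  | @cons _ z _ hadj q =>
    refine ⟨z, hadj.symm, ?_⟩
    have h1 : H.dist v₀ z ≤ q.length := by
      rw [SimpleGraph.dist_comm]; exact SimpleGraph.dist_le q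
    have h2 : H.dist v₀ v = q.length + 1 := by
      rw [SimpleGraph.dist_comm, ← hp, SimpleGraph.Walk.length_cons]
    omega

/-- Step 2: the number of valid colorings is at most `3 * 2 ^ (|V| - 1)`. -/
lemma step2 (hconn : H.Connected) :
    (Finset.univ.filter (fun f : V → Fin 3 => Valid H f)).card
      ≤ 3 * 2 ^ (Fintype.card V - 1) := by
  classical
  obtain ⟨v₀⟩ := hconn.nonempty
  choose par hpar1 hpar2 using fun v (h : v ≠ v₀) => exists_parent H hconn h
  have hcard_eq : (Finset.univ.filter (fun f : V → Fin 3 => Valid H f)).card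
      = Fintype.card {f : V → Fin 3 // Valid H f} := by
    rw [Fintype.card_subtype]
  rw [hcard_eq]
  have hΦ : Function.Injective
      (fun f : {f : V → Fin 3 // Valid H f} =>
        ((f.1 v₀, fun v : {v : V // v ≠ v₀} => enc (f.1 v.1) (f.1 (par v.1 v.2))) :
          Fin 3 × ({v : V // v ≠ v₀} → Bool))) := by
    intro f g hfg
    have h0 : f.1 v₀ = g.1 v₀ := congrArg Prod.fst hfg
    have hsnd : ∀ v : {v : V // v ≠ v₀},
        enc (f.1 v.1) (f.1 (par v.1 v.2)) = enc (g.1 v.1) (g.1 (par v.1 v.2)) :=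
      fun v => congrFun (congrArg Prod.snd hfg) v
    have key : ∀ n, ∀ v : V, H.dist v₀ v = n → f.1 v = g.1 v := by
      intro n
      induction n using Nat.strong_induction_on with
      | _ n ih =>
        intro v hv
        by_cases hv0 : v = v₀
        · subst hv0; exact h0
        · have hdu : H.dist v₀ (par v hv0) < n := hv ▸ hpar2 v hv0
          have hfg_u : f.1 (par v hv0) = g.1 (par v hv0) := ih _ hdu _ rfl
          have hb := hsnd ⟨v, hv0⟩
          dsimp only at hb
          rw [← hfg_u] at hb
          exact enc_inj (f.1 (par v hv0)) (f.1 v) (g.1 v)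
            (f.2 _ v (hpar1 v hv0))
            (hfg_u ▸ g.2 _ v (hpar1 v hv0)) hb
    apply Subtype.ext
    funext v
    exact key (H.dist v₀ v) v rfl
  calc Fintype.card {f : V → Fin 3 // Valid H f}
      ≤ Fintype.card (Fin 3 × ({v : V // v ≠ v₀} → Bool)) :=
        Fintype.card_le_of_injective _ hΦ
    _ = 3 * 2 ^ (Fintype.card V - 1) := by
        rw [Fintype.card_prod, Fintype.card_fun, Fintype.card_bool, Fintype.card_fin]
        have hc : Fintype.card {v : V // v ≠ v₀} = Fintype.card V - 1 := by
          have h := Fintype.card_subtype_compl (fun v : V => v = v₀)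
          rw [Fintype.card_subtype_eq] at h
          convert h using 2
        rw [hc]

end Stmt0Aux

/-- Let H be a finite simple connected graph on h ≥ 1 vertices. Then the
sum, over all vertex covers C of H, of `2 ^ comp (H[C])` is at most `3 · 2 ^ (h - 1)`,
where `comp` counts connected components (the empty graph has 0 components). -/
theorem stmt_0 {V : Type*} [Fintype V] [DecidableEq V]
    (H : SimpleGraph V) [DecidableRel H.Adj]
    (hconn : H.Connected) (hcard : 1 ≤ Fintype.card V) :
    ∑ C ∈ Finset.univ.filter
        (fun C : Finset V => ∀ u v : V, H.Adj u v → u ∈ C ∨ v ∈ C),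
      2 ^ Nat.card (H.induce (↑C : Set V)).ConnectedComponent
      ≤ 3 * 2 ^ (Fintype.card V - 1) := by
  rw [Stmt0Aux.step1 H]
  exact Stmt0Aux.step2 H hconn
end

section
/- Let H be a finite simple graph on h vertices with exactly d connected components. Then the sum, over all vertex covers C of H, of 2^{comp(H[C])} is at most 3^d · 2^{h−d}, where H[C] denotes the subgraph of H induced by C and comp denotes the number of connected components of a graph (with the convention that the empty graph has 0 components). -/
namespace Stmt1Aux

open SimpleGraph

/-- allowed color pairs on an edge: not both 0, not mixed {1,2}. -/
def ok (a b : Fin 3) : Bool :=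
  !(a == 0 && b == 0) && !(a == 1 && b == 2) && !(a == 2 && b == 1)

def dec2 (a : Fin 3) (i : Fin 2) : Fin 3 :=
  if a = 0 then (if i = 0 then 1 else 2)
  else if a = 1 then (if i = 0 then 0 else 1)
  else (if i = 0 then 0 else 2)

def enc (a b : Fin 3) : Fin 2 := if dec2 a 0 = b then 0 else 1

lemma dec_enc : ∀ a b : Fin 3, ok a b = true → dec2 a (enc a b) = b := by decide

lemma eq_of_ok : ∀ a b : Fin 3, a ≠ 0 → b ≠ 0 → ok a b = true → a = b := by decide

lemma ne_zero_of_ok : ∀ a b : Fin 3, ok a b = true → a ≠ 0 ∨ b ≠ 0 := by decide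

lemma ok_cases : ∀ a b : Fin 3,
    (a = 0 ∧ b ≠ 0) ∨ (b = 0 ∧ a ≠ 0) ∨ (a = b ∧ a ≠ 0) → ok a b = true := by decide

lemma fin3_cases : ∀ a : Fin 3, a = 0 ∨ a = 1 ∨ a = 2 := by decide
lemma fin2_cases : ∀ a : Fin 2, a = 0 ∨ a = 1 := by decide

variable {V : Type*} [Fintype V] [DecidableEq V] (H : SimpleGraph V) [DecidableRel H.Adj]

/-- colorings constant on components of the induced graph (on nonzero colors) -/
lemma const_walk (g : V → Fin 3)
    (hval : ∀ u v : V, H.Adj u v → ok (g u) (g v) = true)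
    (C : Finset V) (hC : ∀ v : V, v ∈ C → g v ≠ 0)
    (a b : (↑C : Set V)) (w : (H.induce (↑C : Set V)).Walk a b) :
    g a = g b := by
  induction w with
  | nil => rfl
  | @cons u x y h p ih =>
      exact (eq_of_ok _ _ (hC _ (Finset.mem_coe.mp u.2)) (hC _ (Finset.mem_coe.mp x.2))
        (hval _ _ h)).trans ih

lemma exists_parent (v : V) (hv : v ≠ Quot.out (H.connectedComponentMk v)) :
    ∃ u : V, H.Adj u v ∧
      H.dist (Quot.out (H.connectedComponentMk u)) u
        < H.dist (Quot.out (H.connectedComponentMk v)) v := by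
  set r := Quot.out (H.connectedComponentMk v) with hr
  have hreach : H.Reachable r v :=
    SimpleGraph.ConnectedComponent.eq.mp (Quot.out_eq (H.connectedComponentMk v))
  have hdpos : 0 < H.dist r v := by
    rcases Nat.eq_zero_or_pos (H.dist r v) with h0 | h
    · rcases SimpleGraph.dist_eq_zero_iff_eq_or_not_reachable.mp h0 with h | h
      · exact absurd h.symm hv
      · exact absurd hreach h
    · exact h
  obtain ⟨p, hp⟩ := hreach.exists_walk_length_eq_dist
  obtain ⟨u, h, q, hq⟩ := SimpleGraph.Walk.exists_eq_cons_of_ne (show v ≠ r from hv) p.reverse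
  refine ⟨u, h.symm, ?_⟩
  have hcomp : H.connectedComponentMk u = H.connectedComponentMk v :=
    SimpleGraph.ConnectedComponent.eq.mpr h.symm.reachable
  rw [hcomp, ← hr]
  have h1 : H.dist r u ≤ q.reverse.length := SimpleGraph.dist_le _
  have h2 : q.reverse.length = p.length - 1 := by
    rw [SimpleGraph.Walk.length_reverse]
    have : p.reverse.length = q.length + 1 := by rw [hq]; rfl
    rw [SimpleGraph.Walk.length_reverse] at this
    omega
  rw [hp] at h2
  omega

noncomputable def parent (v : V) : V :=
  if hv : v ≠ Quot.out (H.connectedComponentMk v) then Classical.choose (exists_parent H v hv)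
  else v

lemma parent_spec (v : V) (hv : v ≠ Quot.out (H.connectedComponentMk v)) :
    H.Adj (parent H v) v ∧
      H.dist (Quot.out (H.connectedComponentMk (parent H v))) (parent H v)
        < H.dist (Quot.out (H.connectedComponentMk v)) v := by
  rw [parent, dif_pos hv]
  exact Classical.choose_spec (exists_parent H v hv)

end Stmt1Aux

open Stmt1Aux SimpleGraph in
/-- Let H be a finite simple graph on h vertices with exactly d connected
components. Then the sum, over all vertex covers C of H, of `2 ^ comp (H[C])` is at most
`3 ^ d · 2 ^ (h - d)`, where `comp` counts connected components (the empty graph has 0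
components). -/
theorem stmt_1 {V : Type*} [Fintype V] [DecidableEq V]
    (H : SimpleGraph V) [DecidableRel H.Adj]
    (d : ℕ) (hd : Nat.card H.ConnectedComponent = d) :
    ∑ C ∈ Finset.univ.filter
        (fun C : Finset V => ∀ u v : V, H.Adj u v → u ∈ C ∨ v ∈ C),
      2 ^ Nat.card (H.induce (↑C : Set V)).ConnectedComponent
      ≤ 3 ^ d * 2 ^ (Fintype.card V - d) := by
  classical
  set covers := Finset.univ.filter
      (fun C : Finset V => ∀ u v : V, H.Adj u v → u ∈ C ∨ v ∈ C) with hcovers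
  set valid : Finset (V → Fin 3) :=
      Finset.univ.filter (fun g => ∀ u v : V, H.Adj u v → ok (g u) (g v) = true) with hvalid
  have hmemvalid : ∀ g, g ∈ valid ↔ ∀ u v : V, H.Adj u v → ok (g u) (g v) = true := by
    intro g; simp [hvalid]
  set supp : (V → Fin 3) → Finset V := fun g => Finset.univ.filter (fun v => g v ≠ 0) with hsupp
  have hmemsupp : ∀ g v, v ∈ supp g ↔ g v ≠ 0 := by intro g v; simp [hsupp]
  -- Step A: the sum equals the number of valid colorings
  have hmaps : ∀ g ∈ valid, supp g ∈ covers := by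
    intro g hg
    rw [hcovers, Finset.mem_filter]
    refine ⟨Finset.mem_univ _, fun u v huv => ?_⟩
    rcases ne_zero_of_ok _ _ ((hmemvalid g).mp hg u v huv) with h | h
    · exact Or.inl ((hmemsupp g u).mpr h)
    · exact Or.inr ((hmemsupp g v).mpr h)
  have hfiber : ∀ C ∈ covers,
      (valid.filter (fun g => supp g = C)).card
        = 2 ^ Nat.card (H.induce (↑C : Set V)).ConnectedComponent := by
    intro C hC
    have hCcover : ∀ u v : V, H.Adj u v → u ∈ C ∨ v ∈ C := by
      rw [hcovers, Finset.mem_filter] at hC; exact hC.2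
    have hcard : (valid.filter (fun g => supp g = C)).card
        = (Finset.univ : Finset ((H.induce (↑C : Set V)).ConnectedComponent → Fin 2)).card := by
      refine Finset.card_nbij'
        (fun g K => if g (Quot.out K : (↑C : Set V)) = 2 then 1 else 0)
        (fun f v => if h : v ∈ C then
          (if f ((H.induce (↑C : Set V)).connectedComponentMk ⟨v, Finset.mem_coe.mpr h⟩) = 0
            then 1 else 2) else 0)
        (fun _ _ => Finset.mem_univ _) ?_ ?_ ?_
      · -- backward map lands in the fiber
        intro f _
        set g : V → Fin 3 := fun v => if h : v ∈ C then
          (if f ((H.induce (↑C : Set V)).connectedComponentMk ⟨v, Finset.mem_coe.mpr h⟩) = 0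
            then 1 else 2) else 0 with hgdef
        have hgC : ∀ v, v ∈ C → g v ≠ 0 := by
          intro v hv
          rw [hgdef]; simp only [dif_pos hv]
          split <;> decide
        have hg0 : ∀ v, v ∉ C → g v = 0 := by
          intro v hv; rw [hgdef]; simp only [dif_neg hv]
        refine Finset.mem_filter.mpr ⟨(hmemvalid g).mpr ?_, ?_⟩
        · intro u v huv
          by_cases hu : u ∈ C <;> by_cases hv : v ∈ C
          · -- both in C: adjacent in induced graph, same component, same value
            have hcomp : (H.induce (↑C : Set V)).connectedComponentMk ⟨u, Finset.mem_coe.mpr hu⟩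
                = (H.induce (↑C : Set V)).connectedComponentMk ⟨v, Finset.mem_coe.mpr hv⟩ :=
              SimpleGraph.ConnectedComponent.eq.mpr (SimpleGraph.Adj.reachable (by exact huv))
            have : g u = g v := by
              rw [hgdef]; simp only [dif_pos hu, dif_pos hv, hcomp]
            exact ok_cases _ _ (Or.inr (Or.inr ⟨this, hgC u hu⟩))
          · exact ok_cases _ _ (Or.inr (Or.inl ⟨hg0 v hv, hgC u hu⟩))
          · exact ok_cases _ _ (Or.inl ⟨hg0 u hu, hgC v hv⟩)
          · exact absurd (hCcover u v huv) (by tauto)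
        · ext v
          rw [hmemsupp]
          constructor
          · intro h; by_contra hv; exact h (hg0 v hv)
          · intro h; exact hgC v h
      · -- left inverse
        intro g hg
        rw [Finset.mem_coe, Finset.mem_filter] at hg
        obtain ⟨hgval, hgsupp⟩ := hg
        have hval := (hmemvalid g).mp hgval
        have hgC : ∀ v, v ∈ C → g v ≠ 0 := by
          intro v hv; rw [← hgsupp, hmemsupp] at hv; exact hv
        have hg0 : ∀ v, v ∉ C → g v = 0 := by
          intro v hv; by_contra h
          exact hv (hgsupp ▸ (hmemsupp g v).mpr h)
        funext v
        by_cases hv : v ∈ C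
        · simp only [dif_pos hv]
          set K := (H.induce (↑C : Set V)).connectedComponentMk ⟨v, Finset.mem_coe.mpr hv⟩ with hK
          have hreach : (H.induce (↑C : Set V)).Reachable (Quot.out K) ⟨v, Finset.mem_coe.mpr hv⟩ :=
            SimpleGraph.ConnectedComponent.eq.mp ((Quot.out_eq K).trans hK)
          obtain ⟨w⟩ := hreach
          have hgg : g (Quot.out K : (↑C : Set V)) = g v := const_walk H g hval C hgC _ _ w
          simp only [hgg]
          rcases fin3_cases (g v) with h0 | h1 | h2
          · exact absurd h0 (hgC v hv)
          · simp only [h1]; decide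
          · simp only [h2]; decide
        · simp only [dif_neg hv]; exact (hg0 v hv).symm
      · -- right inverse
        intro f _
        funext K
        have hmem : (Quot.out K : (↑C : Set V)).val ∈ C :=
          Finset.mem_coe.mp (Quot.out K : (↑C : Set V)).2
        simp only [dif_pos hmem]
        have hKK : (H.induce (↑C : Set V)).connectedComponentMk
            ⟨(Quot.out K : (↑C : Set V)).val, Finset.mem_coe.mpr hmem⟩ = K := by
          have : (⟨(Quot.out K : (↑C : Set V)).val, Finset.mem_coe.mpr hmem⟩ : (↑C : Set V))
              = Quot.out K := Subtype.ext rfl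
          rw [this]; exact Quot.out_eq K
        rw [hKK]
        rcases fin2_cases (f K) with h | h <;> simp only [h] <;> decide
    rw [hcard, Finset.card_univ, Fintype.card_fun, Nat.card_eq_fintype_card, Fintype.card_fin]
  have hA : (∑ C ∈ covers, 2 ^ Nat.card (H.induce (↑C : Set V)).ConnectedComponent)
      = valid.card := by
    rw [Finset.card_eq_sum_card_fiberwise hmaps]
    exact (Finset.sum_congr rfl hfiber).symm
  rw [hA]
  -- Step B: injection of valid colorings into (components → Fin 3) × (nonroots → Fin 2)
  have hinj : Set.InjOn
      (fun g : V → Fin 3 => ((fun K : H.ConnectedComponent => g (Quot.out K),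
        fun v : {v : V // v ≠ Quot.out (H.connectedComponentMk v)} =>
          enc (g (parent H v.val)) (g v.val)) : (H.ConnectedComponent → Fin 3) ×
            ({v : V // v ≠ Quot.out (H.connectedComponentMk v)} → Fin 2)))
      ↑valid := by
    intro g hg g' hg' henc
    have hval := (hmemvalid g).mp (by exact_mod_cast hg)
    have hval' := (hmemvalid g').mp (by exact_mod_cast hg')
    have hfst : ∀ K : H.ConnectedComponent, g (Quot.out K) = g' (Quot.out K) :=
      fun K => congrFun (congrArg Prod.fst henc) K
    have hsnd : ∀ v : {v : V // v ≠ Quot.out (H.connectedComponentMk v)},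
        enc (g (parent H v.val)) (g v.val) = enc (g' (parent H v.val)) (g' v.val) :=
      fun v => congrFun (congrArg Prod.snd henc) v
    have key : ∀ n : ℕ, ∀ v : V,
        H.dist (Quot.out (H.connectedComponentMk v)) v = n → g v = g' v := by
      intro n
      induction n using Nat.strong_induction_on with
      | _ n ih =>
        intro v hn
        by_cases hv : v = Quot.out (H.connectedComponentMk v)
        · have := hfst (H.connectedComponentMk v)
          rw [← hv] at this; exact this
        · obtain ⟨hadj, hlt⟩ := parent_spec H v hv
          rw [hn] at hlt
          have hpu : g (parent H v) = g' (parent H v) := ih _ hlt _ rfl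
          have h1 : dec2 (g (parent H v)) (enc (g (parent H v)) (g v)) = g v :=
            dec_enc _ _ (hval _ _ hadj)
          have h2 : dec2 (g' (parent H v)) (enc (g' (parent H v)) (g' v)) = g' v :=
            dec_enc _ _ (hval' _ _ hadj)
          have h3 : enc (g (parent H v)) (g v) = enc (g' (parent H v)) (g' v) := hsnd ⟨v, hv⟩
          rw [← h1, h3, hpu, h2]
    funext v
    exact key _ v rfl
  have hle : valid.card ≤ Fintype.card ((H.ConnectedComponent → Fin 3) ×
      ({v : V // v ≠ Quot.out (H.connectedComponentMk v)} → Fin 2)) := by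
    have h := Finset.card_le_card_of_injOn _ (fun g _ => Finset.mem_univ _) hinj
    rwa [Finset.card_univ] at h
  refine hle.trans ?_
  -- compute the cardinality of T
  have hroots : Fintype.card {v : V // v = Quot.out (H.connectedComponentMk v)} = d := by
    rw [← hd, Nat.card_eq_fintype_card]
    refine Fintype.card_congr ⟨fun x => H.connectedComponentMk x.val,
      fun K => ⟨Quot.out K, (congrArg Quot.out (Quot.out_eq K)).symm⟩, ?_, ?_⟩
    · intro x; exact Subtype.ext x.2.symm
    · intro K; exact Quot.out_eq K
  have hnonroots : Fintype.card {v : V // v ≠ Quot.out (H.connectedComponentMk v)}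
      = Fintype.card V - d := by
    rw [Fintype.card_subtype_compl, hroots]
  have hcompd : Fintype.card H.ConnectedComponent = d := by
    rw [← hd, Nat.card_eq_fintype_card]
  rw [Fintype.card_prod, Fintype.card_fun, Fintype.card_fun, Fintype.card_fin,
    Fintype.card_fin, hnonroots, hcompd]
end

section
/- Let G be a finite simple connected graph and let T be a nonempty vertex cover of G such that the induced subgraph G[T] has exactly t connected components. Then G has a connected vertex cover T' with T ⊆ T' and |T'| ≤ |T| + t − 1. -/
/-- A set of vertices is a vertex cover if every edge has at least one endpoint in it. -/
def IsVertexCover {V : Type*} (G : SimpleGraph V) (X : Set V) : Prop :=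
  ∀ ⦃u v : V⦄, G.Adj u v → u ∈ X ∨ v ∈ X

open SimpleGraph hiding IsVertexCover

lemma cover_mono {V : Type*} {G : SimpleGraph V} {T T' : Set V} (h : T ⊆ T')
    (hc : IsVertexCover G T) : IsVertexCover G T' := fun u v huv =>
  (hc huv).imp (fun hu => h hu) (fun hv => h hv)

lemma same_comp_of_adj {V : Type*} {G : SimpleGraph V} {T : Set V} {a b : V}
    (ha : a ∈ T) (hb : b ∈ T) (hab : G.Adj a b) :
    (G.induce T).connectedComponentMk ⟨a, ha⟩ = (G.induce T).connectedComponentMk ⟨b, hb⟩ :=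
  ConnectedComponent.sound (Adj.reachable (by simp [hab]))

lemma find_w {V : Type*} {G : SimpleGraph V} {T : Set V} (hcov : IsVertexCover G T) :
    ∀ n : ℕ, ∀ (u v : V) (hu : u ∈ T) (hv : v ∈ T) (p : G.Walk u v), p.length ≤ n →
    (G.induce T).connectedComponentMk ⟨u, hu⟩ ≠ (G.induce T).connectedComponentMk ⟨v, hv⟩ →
    ∃ w, w ∉ T ∧ ∃ a, ∃ ha : a ∈ T, ∃ b, ∃ hb : b ∈ T, G.Adj w a ∧ G.Adj w b ∧
      (G.induce T).connectedComponentMk ⟨a, ha⟩ ≠ (G.induce T).connectedComponentMk ⟨b, hb⟩ := by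
  intro n
  induction n with
  | zero =>
    intro u v hu hv p hlen hne
    have huv : u = v := p.eq_of_length_eq_zero (Nat.le_zero.mp hlen)
    subst huv
    exact absurd rfl hne
  | succ n ih =>
    intro u v hu hv p hlen hne
    cases p with
    | nil => exact absurd rfl hne
    | @cons _ x _ h q =>
      by_cases hx : x ∈ T
      · have hux := same_comp_of_adj hu hx h
        refine ih x v hx hv q ?_ ?_
        · simpa using Nat.le_of_succ_le_succ (by simpa using hlen)
        · rw [← hux]; exact hne
      · cases q with
        | nil => exact absurd hv hx
        | @cons _ y _ h2 r =>
          have hy : y ∈ T := by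
            rcases hcov h2 with h' | h'
            · exact absurd h' hx
            · exact h'
          by_cases huy : (G.induce T).connectedComponentMk ⟨u, hu⟩ =
              (G.induce T).connectedComponentMk ⟨y, hy⟩
          · refine ih y v hy hv r ?_ ?_
            · have : r.length + 2 ≤ n + 1 := by simpa using hlen
              omega
            · rw [← huy]; exact hne
          · exact ⟨x, hx, u, hu, y, hy, h.symm, h2, huy⟩

lemma card_lt_of_merge {V : Type*} [Finite V] {G : SimpleGraph V} {T : Set V} {w a b : V}
    (hw : w ∉ T) (ha : a ∈ T) (hb : b ∈ T) (hwa : G.Adj w a) (hwb : G.Adj w b)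
    (hne : (G.induce T).connectedComponentMk ⟨a, ha⟩ ≠
      (G.induce T).connectedComponentMk ⟨b, hb⟩) :
    Nat.card (G.induce (insert w T)).ConnectedComponent <
      Nat.card (G.induce T).ConnectedComponent := by
  have hsub : T ⊆ insert w T := Set.subset_insert w T
  let f := (G.induceHomOfLE hsub).toHom
  set φ : (G.induce T).ConnectedComponent → (G.induce (insert w T)).ConnectedComponent :=
    ConnectedComponent.map f with hφ
  have hwmem : w ∈ insert w T := Set.mem_insert w T
  have key : ∀ (c : V) (hc : c ∈ T), G.Adj w c →
      φ ((G.induce T).connectedComponentMk ⟨c, hc⟩) =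
        (G.induce (insert w T)).connectedComponentMk ⟨w, hwmem⟩ := by
    intro c hc hadj
    have : (G.induce (insert w T)).Adj ⟨c, hsub hc⟩ ⟨w, hwmem⟩ := by
      simp [hadj.symm]
    exact ConnectedComponent.sound this.reachable
  have hsurj : Function.Surjective φ := by
    intro c
    refine c.ind ?_
    rintro ⟨x, hx⟩
    rcases Set.mem_insert_iff.mp hx with rfl | hxT
    · refine ⟨(G.induce T).connectedComponentMk ⟨a, ha⟩, ?_⟩
      rw [key a ha hwa]
    · exact ⟨(G.induce T).connectedComponentMk ⟨x, hxT⟩, rfl⟩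
  have hninj : ¬ Function.Injective φ := by
    intro hinj
    apply hne
    apply hinj
    rw [key a ha hwa, key b hb hwb]
  have i1 := Fintype.ofFinite (G.induce T).ConnectedComponent
  have i2 := Fintype.ofFinite (G.induce (insert w T)).ConnectedComponent
  rw [Nat.card_eq_fintype_card, Nat.card_eq_fintype_card]
  exact Fintype.card_lt_of_surjective_not_injective φ hsurj hninj

theorem stmt_2_aux {V : Type*} [Fintype V] [DecidableEq V]
    (G : SimpleGraph V) (hconn : G.Connected) :
    ∀ t : ℕ, ∀ T : Set V, T.Nonempty → IsVertexCover G T →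
    Nat.card (G.induce T).ConnectedComponent = t →
    ∃ T' : Set V, T ⊆ T' ∧ IsVertexCover G T' ∧ (G.induce T').Connected ∧
      T'.ncard ≤ T.ncard + t - 1 := by
  intro t
  induction t using Nat.strong_induction_on with
  | _ t ih =>
    intro T hTne hcov ht
    
    have hNe : Nonempty (G.induce T).ConnectedComponent := by
      obtain ⟨x, hx⟩ := hTne
      exact ⟨(G.induce T).connectedComponentMk ⟨x, hx⟩⟩
    have htpos : 0 < t := ht ▸ Nat.card_pos
    by_cases ht1 : t = 1
    · -- G.induce T is connected
      subst ht1
      refine ⟨T, subset_rfl, hcov, ?_, by omega⟩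
      have hsub : Subsingleton (G.induce T).ConnectedComponent := by
        have := Nat.card_eq_one_iff_unique.mp ht
        exact this.1
      rw [connected_iff]
      refine ⟨fun x y => (ConnectedComponent.eq).mp (Subsingleton.elim _ _), ?_⟩
      obtain ⟨x, hx⟩ := hTne
      exact ⟨⟨x, hx⟩⟩
    · -- t ≥ 2 : find two distinct components
      have ht2 : 2 ≤ t := by omega
      have hnt : Nontrivial (G.induce T).ConnectedComponent :=
        Finite.one_lt_card_iff_nontrivial.mp (by omega)
      obtain ⟨c, d, hcd⟩ := hnt.exists_pair_ne
      obtain ⟨⟨u, hu⟩, rfl⟩ := c.exists_rep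
      obtain ⟨⟨v, hv⟩, rfl⟩ := d.exists_rep
      obtain ⟨p⟩ := hconn.preconnected u v
      obtain ⟨w, hw, a, ha, b, hb, hwa, hwb, hab⟩ :=
        find_w hcov p.length u v hu hv p le_rfl hcd
      have hlt := card_lt_of_merge hw ha hb hwa hwb hab
      rw [ht] at hlt
      set t₂ := Nat.card (G.induce (insert w T)).ConnectedComponent with ht₂
      obtain ⟨T', hsub', hcov', hconn', hcard'⟩ :=
        ih t₂ hlt (insert w T) (Set.insert_nonempty w T)
          (cover_mono (Set.subset_insert w T) hcov) rfl
      refine ⟨T', (Set.subset_insert w T).trans hsub', hcov', hconn', ?_⟩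
      have hins : (insert w T).ncard = T.ncard + 1 :=
        Set.ncard_insert_of_notMem hw T.toFinite
      rw [hins] at hcard'
      omega

/-- Let G be a finite simple connected graph and let T be a nonempty vertex
cover of G such that the induced subgraph G[T] has exactly t connected components. Then
G has a connected vertex cover T' with T ⊆ T' and |T'| ≤ |T| + t − 1. -/
theorem stmt_2 {V : Type*} [Fintype V] [DecidableEq V]
    (G : SimpleGraph V) (hconn : G.Connected)
    (T : Set V) (hTne : T.Nonempty) (hcov : IsVertexCover G T)
    (t : ℕ) (ht : Nat.card (G.induce T).ConnectedComponent = t) :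
    ∃ T' : Set V, T ⊆ T' ∧ IsVertexCover G T' ∧ (G.induce T').Connected ∧
      T'.ncard ≤ T.ncard + t - 1 := by
  exact stmt_2_aux G hconn t T hTne hcov ht
end

section
/- Let G be a finite simple connected graph with at least one edge, let k and d be positive integers, and let S ⊆ V(G) with |S| ≤ k be such that V(G) ∖ S can be partitioned into a clique C with |C| ≤ d − 1 and an independent set I. Then G has a connected vertex cover of size at most 2k + d − 1. -/
/-- A connected vertex cover is a vertex cover inducing a connected subgraph. -/
def IsConnectedVertexCover {V : Type*} (G : SimpleGraph V) (X : Set V) : Prop :=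
  IsVertexCover G X ∧ (G.induce X).Connected

section Aux

open SimpleGraph

variable {V : Type*} [Fintype V] {G : SimpleGraph V}

private lemma induce_adj_of_adj {Y : Set V} {x y : V} (hx : x ∈ Y) (hy : y ∈ Y)
    (h : G.Adj x y) : (G.induce Y).Adj ⟨x, hx⟩ ⟨y, hy⟩ := by
  simpa using h

private lemma merge_lemma {Y : Set V} {w a b : V} (hw : w ∉ Y) (ha : a ∈ Y) (hb : b ∈ Y)
    (hwa : G.Adj a w) (hwb : G.Adj w b)
    (hnr : ¬ (G.induce Y).Reachable ⟨a, ha⟩ ⟨b, hb⟩) :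
    Nat.card (G.induce (insert w Y)).ConnectedComponent
      < Nat.card (G.induce Y).ConnectedComponent := by
  classical
  have hsub : Y ⊆ insert w Y := Set.subset_insert w Y
  have hwmem : w ∈ insert w Y := Set.mem_insert w Y
  let φ : G.induce Y →g G.induce (insert w Y) := (G.induceHomOfLE hsub).toHom
  let f : (G.induce Y).ConnectedComponent → (G.induce (insert w Y)).ConnectedComponent :=
    SimpleGraph.ConnectedComponent.map φ
  have hwa' : (G.induce (insert w Y)).Adj ⟨a, hsub ha⟩ ⟨w, hwmem⟩ :=
    induce_adj_of_adj _ _ hwa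
  have hwb' : (G.induce (insert w Y)).Adj ⟨w, hwmem⟩ ⟨b, hsub hb⟩ :=
    induce_adj_of_adj _ _ hwb
  have hfa : f ((G.induce Y).connectedComponentMk ⟨a, ha⟩)
      = (G.induce (insert w Y)).connectedComponentMk ⟨a, hsub ha⟩ := rfl
  have hfb : f ((G.induce Y).connectedComponentMk ⟨b, hb⟩)
      = (G.induce (insert w Y)).connectedComponentMk ⟨b, hsub hb⟩ := rfl
  have hsurj : Function.Surjective f := by
    intro K
    obtain ⟨z, rfl⟩ := K.exists_rep
    rcases Set.mem_insert_iff.mp z.2 with hz | hz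
    · refine ⟨(G.induce Y).connectedComponentMk ⟨a, ha⟩, ?_⟩
      rw [hfa]
      have hz' : z = ⟨w, hwmem⟩ := Subtype.ext hz
      rw [hz']
      exact SimpleGraph.ConnectedComponent.sound hwa'.reachable
    · refine ⟨(G.induce Y).connectedComponentMk ⟨z.1, hz⟩, ?_⟩
      have : φ ⟨z.1, hz⟩ = z := Subtype.ext rfl
      show (G.induce (insert w Y)).connectedComponentMk (φ ⟨z.1, hz⟩) = _
      rw [this]
      rfl
  have hninj : ¬ Function.Injective f := by
    intro hinj
    apply hnr
    have : f ((G.induce Y).connectedComponentMk ⟨a, ha⟩)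
        = f ((G.induce Y).connectedComponentMk ⟨b, hb⟩) := by
      rw [hfa, hfb]
      exact SimpleGraph.ConnectedComponent.sound (hwa'.reachable.trans hwb'.reachable)
    exact SimpleGraph.ConnectedComponent.exact (hinj this)
  haveI : Finite (G.induce Y).ConnectedComponent :=
    Finite.of_surjective _ Quot.mk_surjective
  haveI : Finite (G.induce (insert w Y)).ConnectedComponent :=
    Finite.of_surjective _ Quot.mk_surjective
  haveI := Fintype.ofFinite (G.induce Y).ConnectedComponent
  haveI := Fintype.ofFinite (G.induce (insert w Y)).ConnectedComponent
  rw [Nat.card_eq_fintype_card, Nat.card_eq_fintype_card]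
  exact Fintype.card_lt_of_surjective_not_injective f hsurj hninj

private lemma find_bridge {Y : Set V} (hYvc : _root_.IsVertexCover G Y) :
    ∀ (n : ℕ) (u v : V) (p : G.Walk u v), p.length ≤ n → ∀ (hu : u ∈ Y) (hv : v ∈ Y),
      ¬ (G.induce Y).Reachable ⟨u, hu⟩ ⟨v, hv⟩ →
      ∃ (w a b : V) (ha : a ∈ Y) (hb : b ∈ Y), w ∉ Y ∧ G.Adj a w ∧ G.Adj w b ∧
        ¬ (G.induce Y).Reachable ⟨a, ha⟩ ⟨b, hb⟩ := by
  intro n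
  induction n with
  | zero =>
    intro u v p hp hu hv hr
    cases p with
    | nil => exact absurd (SimpleGraph.Reachable.refl _) hr
    | cons h q => simp at hp
  | succ n ih =>
    intro u v p hp hu hv hr
    cases p with
    | nil => exact absurd (SimpleGraph.Reachable.refl _) hr
    | @cons _ u' _ h q =>
      by_cases hu' : u' ∈ Y
      · have hstep : (G.induce Y).Reachable ⟨u, hu⟩ ⟨u', hu'⟩ :=
          (induce_adj_of_adj hu hu' h).reachable
        have hr' : ¬ (G.induce Y).Reachable ⟨u', hu'⟩ ⟨v, hv⟩ := fun hc => hr (hstep.trans hc)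
        exact ih u' v q (by simp at hp; omega) hu' hv hr'
      · cases q with
        | nil => exact absurd hv hu'
        | @cons _ u'' _ h2 r =>
          have hu'' : u'' ∈ Y := (hYvc h2).resolve_left hu'
          by_cases hre : (G.induce Y).Reachable ⟨u, hu⟩ ⟨u'', hu''⟩
          · have hr' : ¬ (G.induce Y).Reachable ⟨u'', hu''⟩ ⟨v, hv⟩ :=
              fun hc => hr (hre.trans hc)
            exact ih u'' v r (by simp at hp; omega) hu'' hv hr'
          · exact ⟨u', u, u'', hu, hu'', hu', h, h2, hre⟩

private lemma connect_up (hGconn : G.Connected) :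
    ∀ (n : ℕ) (Y : Set V), _root_.IsVertexCover G Y → Y.Nonempty →
      Nat.card (G.induce Y).ConnectedComponent ≤ n →
      ∃ T : Set V, Y ⊆ T ∧ (G.induce T).Connected ∧ T.ncard ≤ Y.ncard + (n - 1) := by
  intro n
  induction n with
  | zero =>
    intro Y hvc hne hcard
    haveI : Nonempty ↥Y := hne.to_subtype
    haveI : Finite (G.induce Y).ConnectedComponent :=
      Finite.of_surjective _ Quot.mk_surjective
    haveI : Nonempty (G.induce Y).ConnectedComponent :=
      Nonempty.map (G.induce Y).connectedComponentMk ‹Nonempty ↥Y›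
    have := Nat.card_pos (α := (G.induce Y).ConnectedComponent)
    omega
  | succ n ih =>
    intro Y hvc hne hcard
    haveI : Nonempty ↥Y := hne.to_subtype
    by_cases hco : (G.induce Y).Connected
    · exact ⟨Y, le_refl _, hco, by omega⟩
    · have hnp : ∃ x y : ↥Y, ¬ (G.induce Y).Reachable x y := by
        by_contra hcon
        push_neg at hcon
        exact hco (SimpleGraph.Connected.mk fun u v => hcon u v)
      obtain ⟨x, y, hxy⟩ := hnp
      obtain ⟨p⟩ := hGconn.preconnected x.1 y.1
      have hxy' : ¬ (G.induce Y).Reachable ⟨x.1, x.2⟩ ⟨y.1, y.2⟩ := by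
        convert hxy <;> exact Subtype.ext rfl
      obtain ⟨w, a, b, ha, hb, hw, hadj1, hadj2, hnr⟩ :=
        find_bridge hvc p.length x.1 y.1 p (le_refl _) x.2 y.2 hxy'
      have hlt := merge_lemma hw ha hb hadj1 hadj2 hnr
      have hne' : (insert w Y).Nonempty := ⟨w, Set.mem_insert w Y⟩
      have hvc' : _root_.IsVertexCover G (insert w Y) := by
        intro p q hpq
        rcases hvc hpq with hh | hh
        · exact Or.inl (Set.mem_insert_of_mem _ hh)
        · exact Or.inr (Set.mem_insert_of_mem _ hh)
      -- card of Y's components is at least 2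
      haveI : Finite (G.induce Y).ConnectedComponent :=
        Finite.of_surjective _ Quot.mk_surjective
      have h2 : 2 ≤ Nat.card (G.induce Y).ConnectedComponent := by
        have : Nontrivial (G.induce Y).ConnectedComponent := by
          refine ⟨(G.induce Y).connectedComponentMk x, (G.induce Y).connectedComponentMk y, ?_⟩
          intro hc
          exact hxy (SimpleGraph.ConnectedComponent.exact hc)
        exact Finite.one_lt_card_iff_nontrivial.mpr this
      obtain ⟨T, hsub, hTconn, hTcard⟩ := ih (insert w Y) hvc' hne' (by omega)
      refine ⟨T, (Set.subset_insert w Y).trans hsub, hTconn, ?_⟩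
      have hins : (insert w Y).ncard ≤ Y.ncard + 1 := Set.ncard_insert_le w Y
      omega

end Aux

/-- Let G be a finite simple connected graph with at least one edge, let k
and d be positive integers, and let S ⊆ V(G) with |S| ≤ k be such that V(G) ∖ S can be
partitioned into a clique C with |C| ≤ d − 1 and an independent set I. Then G has a
connected vertex cover of size at most 2k + d − 1. -/
theorem stmt_3 {V : Type*} [Fintype V] [DecidableEq V]
    (G : SimpleGraph V) (hconn : G.Connected) (hedge : G.edgeSet.Nonempty)
    (k d : ℕ) (hk : 0 < k) (hd : 0 < d)
    (S C I : Set V) (hS : S.ncard ≤ k)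
    (hpart : C ∪ I = Sᶜ) (hdisj : Disjoint C I)
    (hC : G.IsClique C) (hCcard : C.ncard ≤ d - 1)
    (hI : ∀ u ∈ I, ∀ v ∈ I, ¬ G.Adj u v) :
    ∃ T : Set V, IsConnectedVertexCover G T ∧ T.ncard ≤ 2 * k + d - 1 := by
  classical
  set X : Set V := S ∪ C with hX
  have hmemI : ∀ z : V, z ∉ X → z ∈ I := by
    intro z hz
    have hzS : z ∉ S := fun h => hz (Or.inl h)
    have hzC : z ∉ C := fun h => hz (Or.inr h)
    have : z ∈ C ∪ I := hpart ▸ hzS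
    exact this.resolve_left hzC
  have hXvc : IsVertexCover G X := by
    intro u v huv
    by_contra hcon
    push_neg at hcon
    exact hI u (hmemI u hcon.1) v (hmemI v hcon.2) huv
  have hXne : X.Nonempty := by
    obtain ⟨e, he⟩ := hedge
    induction e using Sym2.ind with
    | _ u v =>
      rcases hXvc ((G.mem_edgeSet).mp he) with h | h
      exacts [⟨u, h⟩, ⟨v, h⟩]
  -- bound the number of components of the induced graph on X
  haveI : Finite (G.induce X).ConnectedComponent :=
    Finite.of_surjective _ Quot.mk_surjective
  have hcomp : Nat.card (G.induce X).ConnectedComponent ≤ S.ncard + 1 := by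
    set Φ : (G.induce X).ConnectedComponent → Option ↥S := fun K =>
      if h : ∃ s : ↥S, (G.induce X).connectedComponentMk ⟨s.1, Or.inl s.2⟩ = K
      then some h.choose else none with hΦ
    have hinj : Function.Injective Φ := by
      intro K1 K2 heq
      by_cases h1 : ∃ s : ↥S, (G.induce X).connectedComponentMk ⟨s.1, Or.inl s.2⟩ = K1
      · by_cases h2 : ∃ s : ↥S, (G.induce X).connectedComponentMk ⟨s.1, Or.inl s.2⟩ = K2
        · have e1 : Φ K1 = some h1.choose := dif_pos h1
          have e2 : Φ K2 = some h2.choose := dif_pos h2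
          rw [e1, e2] at heq
          have : h1.choose = h2.choose := Option.some_injective _ heq
          rw [← h1.choose_spec, ← h2.choose_spec, this]
        · have e1 : Φ K1 = some h1.choose := dif_pos h1
          have e2 : Φ K2 = none := dif_neg h2
          rw [e1, e2] at heq; exact absurd heq (by simp)
      · by_cases h2 : ∃ s : ↥S, (G.induce X).connectedComponentMk ⟨s.1, Or.inl s.2⟩ = K2
        · have e1 : Φ K1 = none := dif_neg h1
          have e2 : Φ K2 = some h2.choose := dif_pos h2
          rw [e1, e2] at heq; exact absurd heq (by simp)
        · -- both components consist only of C vertices; C is a clique, so they coincide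
          obtain ⟨x, hx⟩ := K1.exists_rep
          obtain ⟨y, hy⟩ := K2.exists_rep
          have hxC : x.1 ∈ C := by
            rcases x.2 with h | h
            · exact absurd ⟨⟨x.1, h⟩, by rw [← hx]; congr⟩ h1
            · exact h
          have hyC : y.1 ∈ C := by
            rcases y.2 with h | h
            · exact absurd ⟨⟨y.1, h⟩, by rw [← hy]; congr⟩ h2
            · exact h
          rw [← hx, ← hy]
          by_cases hxy : x.1 = y.1
          · congr 1; exact Subtype.ext hxy
          · exact SimpleGraph.ConnectedComponent.sound
              (SimpleGraph.Adj.reachable (by simpa using hC hxC hyC hxy))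
    calc Nat.card (G.induce X).ConnectedComponent ≤ Nat.card (Option ↥S) :=
          Nat.card_le_card_of_injective Φ hinj
      _ = S.ncard + 1 := by
          haveI := Fintype.ofFinite ↥S
          rw [Nat.card_eq_fintype_card, Fintype.card_option,
            ← Nat.card_coe_set_eq, Nat.card_eq_fintype_card]
  obtain ⟨T, hXT, hTconn, hTcard⟩ :=
    connect_up hconn (Nat.card (G.induce X).ConnectedComponent) X hXvc hXne (le_refl _)
  refine ⟨T, ⟨fun u v huv => ?_, hTconn⟩, ?_⟩
  · rcases hXvc huv with h | h
    exacts [Or.inl (hXT h), Or.inr (hXT h)]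
  · have hXcard : X.ncard ≤ k + (d - 1) := by
      calc X.ncard ≤ S.ncard + C.ncard := Set.ncard_union_le S C
        _ ≤ k + (d - 1) := by omega
    omega
end

section
/- Let G be a finite simple connected graph and let C ⊆ V(G) be a clique with 2 ≤ |C| < |V(G)|. Let G' be the graph obtained from G by deleting all vertices of C and adding a new vertex u_C adjacent exactly to the vertices of N_G(C) ∖ C (the vertices outside C having a neighbour in C). If D' is a connected vertex cover of G', then G has a connected vertex cover D with |D| ≤ |D'| + |C| − 1. -/
open SimpleGraph

private lemma reach_map' {α β : Type*} {H : SimpleGraph α} {K : SimpleGraph β} (f : α → β)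
    (h : ∀ a b, H.Adj a b → K.Reachable (f a) (f b)) {x y : α} (hr : H.Reachable x y) :
    K.Reachable (f x) (f y) := by
  obtain ⟨w⟩ := hr
  induction w with
  | nil => exact Reachable.refl _
  | cons ha _ ih => exact (h _ _ ha).trans ih

private lemma walk_closed' {α : Type*} {H : SimpleGraph α} {C : Set α}
    (hcl : ∀ a b, H.Adj a b → a ∈ C → b ∈ C) {x y : α} (w : H.Walk x y) : x ∈ C → y ∈ C := by
  induction w with
  | nil => exact id
  | cons ha _ ih => exact fun hx => ih (hcl _ _ ha hx)

/-- Let G be a finite simple connected graph and C ⊆ V(G) a clique with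
2 ≤ |C| < |V(G)|. Let G' be the graph obtained from G by deleting all vertices of C
and adding a new vertex u_C (modelled as `none`) adjacent exactly to the vertices of
N_G(C) ∖ C. If D' is a connected vertex cover of G', then G has a connected vertex
cover D with |D| ≤ |D'| + |C| − 1. -/
theorem stmt_5 {V : Type*} [Fintype V] [DecidableEq V]
    (G : SimpleGraph V) (hconn : G.Connected)
    (C : Set V) (hC : G.IsClique C) (h2 : 2 ≤ C.ncard) (hlt : C.ncard < Fintype.card V)
    (G' : SimpleGraph (Option {v : V // v ∉ C}))
    (hadj : ∀ a b : {v : V // v ∉ C}, G'.Adj (some a) (some b) ↔ G.Adj ↑a ↑b)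
    (hnew : ∀ a : {v : V // v ∉ C}, G'.Adj (some a) none ↔ ∃ c ∈ C, G.Adj ↑a c)
    (D' : Set (Option {v : V // v ∉ C}))
    (hD' : IsConnectedVertexCover G' D') :
    ∃ D : Set V, IsConnectedVertexCover G D ∧ D.ncard ≤ D'.ncard + C.ncard - 1 := by
  classical
  set S : Set V := Subtype.val '' {a : {v : V // v ∉ C} | some a ∈ D'} with hSdef
  have hSmem : ∀ (a : {v : V // v ∉ C}), some a ∈ D' → (a : V) ∈ S := fun a ha => ⟨a, ha, rfl⟩
  have hNC : ∀ (v : V) (hv : v ∉ C), (∃ c ∈ C, G.Adj v c) → none ∉ D' → v ∈ S := by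
    intro v hv hc hn
    rcases hD'.1 ((hnew ⟨v, hv⟩).2 hc) with h | h
    · exact hSmem _ h
    · exact absurd h hn
  have hScard : S.ncard = {a : {v : V // v ∉ C} | some a ∈ D'}.ncard :=
    Set.ncard_image_of_injective _ Subtype.val_injective
  have hCne : C.Nonempty := by
    rw [← Set.ncard_pos]; omega
  by_cases hn : none ∈ D'
  · -- Case 1 : D = C ∪ S
    obtain ⟨c0, hc0⟩ := hCne
    have hsub : ∀ a : {v : V // v ∉ C}, some a ∈ D' → (a : V) ∈ C ∪ S :=
      fun a h => Or.inr (hSmem a h)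
    have hCreach : ∀ (c : V) (hc : c ∈ C) (hd : c ∈ C ∪ S),
        (G.induce (C ∪ S)).Reachable ⟨c, hd⟩ ⟨c0, Or.inl hc0⟩ := by
      intro c hc hd
      rcases eq_or_ne c c0 with rfl | hne
      · exact Reachable.refl _
      · exact Adj.reachable (by exact hC hc hc0 hne)
    let f : {o // o ∈ D'} → {v // v ∈ C ∪ S} := fun o =>
      match o with
      | ⟨some a, h⟩ => ⟨a, hsub a h⟩
      | ⟨none, _⟩ => ⟨c0, Or.inl hc0⟩
    have hstep : ∀ a b : {o // o ∈ D'}, (G'.induce D').Adj a b →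
        (G.induce (C ∪ S)).Reachable (f a) (f b) := by
      rintro ⟨a, ha⟩ ⟨b, hb⟩ hab
      have hab' : G'.Adj a b := hab
      match a, b with
      | some a, some b =>
          exact Adj.reachable (by exact (hadj a b).1 hab')
      | some a, none =>
          obtain ⟨c, hcC, hac⟩ := (hnew a).1 hab'
          have h1 : (G.induce (C ∪ S)).Adj ⟨a, hsub a ha⟩ ⟨c, Or.inl hcC⟩ := hac
          exact h1.reachable.trans (hCreach c hcC _)
      | none, some b =>
          obtain ⟨c, hcC, hac⟩ := (hnew b).1 hab'.symm
          have h1 : (G.induce (C ∪ S)).Adj ⟨b, hsub b hb⟩ ⟨c, Or.inl hcC⟩ := hac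
          exact (h1.reachable.trans (hCreach c hcC _)).symm
      | none, none => exact absurd hab' (G'.loopless.irrefl _)
    refine ⟨C ∪ S, ⟨?_, ?_⟩, ?_⟩
    · -- vertex cover
      intro u v huv
      by_cases hu : u ∈ C
      · exact Or.inl (Or.inl hu)
      by_cases hv : v ∈ C
      · exact Or.inr (Or.inl hv)
      rcases hD'.1 ((hadj ⟨u, hu⟩ ⟨v, hv⟩).2 huv) with h | h
      · exact Or.inl (Or.inr (hSmem _ h))
      · exact Or.inr (Or.inr (hSmem _ h))
    · -- connected
      rw [connected_iff]
      refine ⟨?_, ⟨⟨c0, Or.inl hc0⟩⟩⟩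
      have hbase : ∀ z : {v // v ∈ C ∪ S},
          (G.induce (C ∪ S)).Reachable z ⟨c0, Or.inl hc0⟩ := by
        rintro ⟨z, hz | hz⟩
        · exact hCreach z hz _
        · obtain ⟨a, ha, rfl⟩ := hz
          have hr := reach_map' f hstep
            (hD'.2.preconnected ⟨some a, ha⟩ ⟨none, hn⟩)
          exact hr
      intro x y
      exact (hbase x).trans (hbase y).symm
    · -- cardinality
      have h1 : ({a : {v : V // v ∉ C} | some a ∈ D'}).ncard ≤ (D' \ {none}).ncard := by
        apply Set.ncard_le_ncard_of_injOn (fun a => some a)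
        · intro a ha; exact ⟨ha, by simp⟩
        · intro a _ b _ h; exact Option.some_injective _ h
      have h2' : (D' \ {none}).ncard = D'.ncard - 1 := Set.ncard_diff_singleton_of_mem hn
      have h3 : 1 ≤ D'.ncard := by
        have : (0 : ℕ) < D'.ncard := (Set.ncard_pos (Set.toFinite _)).2 ⟨none, hn⟩
        omega
      have h4 := Set.ncard_union_le C S
      omega
  · -- Case 2 : D = (C \ {x}) ∪ S
    -- find a crossing edge
    have hvc : ∃ (v : V) (c : V), v ∉ C ∧ c ∈ C ∧ G.Adj v c := by
      by_contra h
      push_neg at h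
      obtain ⟨c0, hc0⟩ := hCne
      obtain ⟨v0, hv0⟩ : ∃ v : V, v ∉ C := by
        by_contra h'
        push_neg at h'
        have huniv : C = Set.univ := Set.eq_univ_iff_forall.2 h'
        rw [huniv, Set.ncard_univ] at hlt
        simp [Nat.card_eq_fintype_card] at hlt
      have hcl : ∀ a b : V, G.Adj a b → a ∈ C → b ∈ C := by
        intro a b hab haC
        by_contra hbC
        exact h b a hbC haC hab.symm
      exact hv0 ((hconn.preconnected c0 v0).elim fun w => walk_closed' hcl w hc0)
    obtain ⟨v0, c1, hv0, hc1, hadj0⟩ := hvc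
    obtain ⟨x, hx, hxne⟩ : ∃ x ∈ C, x ≠ c1 := by
      have := Set.exists_ne_of_one_lt_ncard (by omega : 1 < C.ncard) c1
      tauto
    have hv0D' : some ⟨v0, hv0⟩ ∈ D' := by
      rcases hD'.1 ((hnew ⟨v0, hv0⟩).2 ⟨c1, hc1, hadj0⟩) with h | h
      · exact h
      · exact absurd h hn
    have hc1m : c1 ∈ C \ {x} := ⟨hc1, fun h => hxne (Set.mem_singleton_iff.1 h).symm⟩
    have hsub : ∀ a : {v : V // v ∉ C}, some a ∈ D' → (a : V) ∈ (C \ {x}) ∪ S :=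
      fun a h => Or.inr (hSmem a h)
    have hc1D : c1 ∈ (C \ {x}) ∪ S := Or.inl hc1m
    have hCreach : ∀ (c : V) (hc : c ∈ C \ {x}) (hd : c ∈ (C \ {x}) ∪ S),
        (G.induce ((C \ {x}) ∪ S)).Reachable ⟨c, hd⟩ ⟨c1, hc1D⟩ := by
      intro c hc hd
      rcases eq_or_ne c c1 with rfl | hne
      · exact Reachable.refl _
      · exact Adj.reachable (by exact hC hc.1 hc1 hne)
    let f : {o // o ∈ D'} → {v // v ∈ (C \ {x}) ∪ S} := fun o =>
      match o with
      | ⟨some a, h⟩ => ⟨a, hsub a h⟩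
      | ⟨none, _⟩ => ⟨c1, hc1D⟩
    have hstep : ∀ a b : {o // o ∈ D'}, (G'.induce D').Adj a b →
        (G.induce ((C \ {x}) ∪ S)).Reachable (f a) (f b) := by
      rintro ⟨a, ha⟩ ⟨b, hb⟩ hab
      have hab' : G'.Adj a b := hab
      match a, b with
      | some a, some b =>
          exact Adj.reachable (by exact (hadj a b).1 hab')
      | some a, none => exact absurd hb hn
      | none, some b => exact absurd ha hn
      | none, none => exact absurd hab' (G'.loopless.irrefl _)
    refine ⟨(C \ {x}) ∪ S, ⟨?_, ?_⟩, ?_⟩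
    · -- vertex cover
      intro u v huv
      by_cases hu : u ∈ C
      · by_cases hv : v ∈ C
        · rcases eq_or_ne u x with rfl | hux
          · exact Or.inr (Or.inl ⟨hv, fun h => huv.ne (Set.mem_singleton_iff.1 h).symm⟩)
          · exact Or.inl (Or.inl ⟨hu, hux⟩)
        · exact Or.inr (Or.inr (hNC v hv ⟨u, hu, huv.symm⟩ hn))
      · by_cases hv : v ∈ C
        · exact Or.inl (Or.inr (hNC u hu ⟨v, hv, huv⟩ hn))
        · rcases hD'.1 ((hadj ⟨u, hu⟩ ⟨v, hv⟩).2 huv) with h | h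
          · exact Or.inl (Or.inr (hSmem _ h))
          · exact Or.inr (Or.inr (hSmem _ h))
    · -- connected
      rw [connected_iff]
      refine ⟨?_, ⟨⟨c1, hc1D⟩⟩⟩
      have hv0S : v0 ∈ S := hSmem _ hv0D'
      have hv0edge : (G.induce ((C \ {x}) ∪ S)).Adj ⟨v0, Or.inr hv0S⟩ ⟨c1, hc1D⟩ := hadj0
      have hbase : ∀ z : {v // v ∈ (C \ {x}) ∪ S},
          (G.induce ((C \ {x}) ∪ S)).Reachable z ⟨c1, hc1D⟩ := by
        rintro ⟨z, hz | hz⟩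
        · exact hCreach z hz _
        · obtain ⟨a, ha, rfl⟩ := hz
          have hr := reach_map' f hstep
            (hD'.2.preconnected ⟨some a, ha⟩ ⟨some ⟨v0, hv0⟩, hv0D'⟩)
          exact hr.trans hv0edge.reachable
      intro p q
      exact (hbase p).trans (hbase q).symm
    · -- cardinality
      have h1 : ({a : {v : V // v ∉ C} | some a ∈ D'}).ncard ≤ D'.ncard := by
        apply Set.ncard_le_ncard_of_injOn (fun a => some a)
        · intro a ha; exact ha
        · intro a _ b _ h; exact Option.some_injective _ h
      have h2' : (C \ {x}).ncard = C.ncard - 1 := Set.ncard_diff_singleton_of_mem hx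
      have h4 := Set.ncard_union_le (C \ {x}) S
      omega
end

section
/- Let G be a finite simple graph and let C ⊆ V(G) be a clique with |C| ≥ 2. Let G' be the graph obtained from G by deleting all vertices of C and adding a new vertex u_C adjacent exactly to the vertices of N_G(C) ∖ C (the vertices outside C having a neighbour in C). If D is a connected vertex cover of G, then (D ∖ C) ∪ {u_C} is a connected vertex cover of G' of size at most |D| − |C| + 2. -/
/-- Let G be a finite simple graph and C ⊆ V(G) a clique with |C| ≥ 2.
Let G' be the graph obtained from G by deleting all vertices of C and adding a new
vertex u_C (modelled as `none`) adjacent exactly to the vertices of N_G(C) ∖ C. If D is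
a connected vertex cover of G, then (D ∖ C) ∪ {u_C} is a connected vertex cover of G'
of size at most |D| − |C| + 2. -/
theorem stmt_6 {V : Type*} [Fintype V] [DecidableEq V]
    (G : SimpleGraph V)
    (C : Set V) (hC : G.IsClique C) (h2 : 2 ≤ C.ncard)
    (G' : SimpleGraph (Option {v : V // v ∉ C}))
    (hadj : ∀ a b : {v : V // v ∉ C}, G'.Adj (some a) (some b) ↔ G.Adj ↑a ↑b)
    (hnew : ∀ a : {v : V // v ∉ C}, G'.Adj (some a) none ↔ ∃ c ∈ C, G.Adj ↑a c)
    (D : Set V) (hD : IsConnectedVertexCover G D) :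
    IsConnectedVertexCover G'
        (insert none (some '' {a : {v : V // v ∉ C} | ↑a ∈ D})) ∧
      (insert none (some '' {a : {v : V // v ∉ C} | ↑a ∈ D})).ncard
        ≤ D.ncard - C.ncard + 2 := by
  classical
  obtain ⟨hDcov, hDconn⟩ := hD
  set S : Set {v : V // v ∉ C} := {a : {v : V // v ∉ C} | ↑a ∈ D} with hSdef
  set D' : Set (Option {v : V // v ∉ C}) := insert none (some '' S) with hD'def
  have hnone : (none : Option {v : V // v ∉ C}) ∈ D' := Set.mem_insert _ _
  -- pick c0 ∈ D ∩ C
  obtain ⟨c1, hc1, c2, hc2, hne⟩ := (Set.one_lt_ncard C.toFinite).mp (by omega)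
  obtain ⟨c0, hc0D, hc0C⟩ : ∃ c0, c0 ∈ D ∧ c0 ∈ C := by
    rcases hDcov (hC hc1 hc2 hne) with h | h
    exacts [⟨c1, h, hc1⟩, ⟨c2, h, hc2⟩]
  -- vertex cover
  have hcov : IsVertexCover G' D' := by
    rintro (_ | a) (_ | b) huv
    · exact absurd huv G'.irrefl
    · exact Or.inl hnone
    · exact Or.inr hnone
    · rcases hDcov ((hadj a b).mp huv) with h | h
      · exact Or.inl (Set.mem_insert_of_mem _ ⟨a, h, rfl⟩)
      · exact Or.inr (Set.mem_insert_of_mem _ ⟨b, h, rfl⟩)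
  -- the collapsing map
  have hfmem : ∀ (v : V), v ∈ D → ∀ h : v ∉ C, some ⟨v, h⟩ ∈ D' := fun v hv h =>
    Set.mem_insert_of_mem _ ⟨⟨v, h⟩, hv, rfl⟩
  let f : ↥D → ↥D' := fun x =>
    if h : (x : V) ∈ C then ⟨none, hnone⟩ else ⟨some ⟨(x : V), h⟩, hfmem x x.2 h⟩
  have step : ∀ x y : ↥D, (G.induce D).Adj x y →
      (G'.induce D').Reachable (f x) (f y) := by
    intro x y hxy
    have hadj' : G.Adj ↑x ↑y := hxy
    by_cases hx : (x : V) ∈ C <;> by_cases hy : (y : V) ∈ C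
    · have : f x = f y := by simp [f, hx, hy]
      rw [this]
    · refine SimpleGraph.Adj.reachable ?_
      have hx' : f x = ⟨none, hnone⟩ := by simp [f, hx]
      have hy' : f y = ⟨some ⟨(y : V), hy⟩, hfmem y y.2 hy⟩ := by simp [f, hy]
      rw [hx', hy']
      show G'.Adj none (some ⟨(y : V), hy⟩)
      exact ((hnew _).mpr ⟨↑x, hx, hadj'.symm⟩).symm
    · refine SimpleGraph.Adj.reachable ?_
      have hx' : f x = ⟨some ⟨(x : V), hx⟩, hfmem x x.2 hx⟩ := by simp [f, hx]
      have hy' : f y = ⟨none, hnone⟩ := by simp [f, hy]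
      rw [hx', hy']
      show G'.Adj (some ⟨(x : V), hx⟩) none
      exact (hnew _).mpr ⟨↑y, hy, hadj'⟩
    · refine SimpleGraph.Adj.reachable ?_
      have hx' : f x = ⟨some ⟨(x : V), hx⟩, hfmem x x.2 hx⟩ := by simp [f, hx]
      have hy' : f y = ⟨some ⟨(y : V), hy⟩, hfmem y y.2 hy⟩ := by simp [f, hy]
      rw [hx', hy']
      show G'.Adj (some ⟨(x : V), hx⟩) (some ⟨(y : V), hy⟩)
      exact (hadj _ _).mpr hadj'
  have lift : ∀ x y : ↥D, (G.induce D).Reachable x y →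
      (G'.induce D').Reachable (f x) (f y) := by
    intro x y h
    obtain ⟨w⟩ := h
    induction w with
    | nil => exact SimpleGraph.Reachable.refl _
    | cons h p ih => exact (step _ _ h).trans ih
  -- connectedness
  have hconn : (G'.induce D').Connected := by
    rw [SimpleGraph.connected_iff]
    refine ⟨?_, ⟨⟨none, hnone⟩⟩⟩
    have reach : ∀ z : ↥D', (G'.induce D').Reachable z ⟨none, hnone⟩ := by
      rintro ⟨z, hz⟩
      match z, hz with
      | none, hz => exact SimpleGraph.Reachable.refl _
      | some a, hz =>
        have haD : (a : V) ∈ D := by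
          rcases hz with h | ⟨b, hb, hba⟩
          · exact absurd h (by simp)
          · obtain rfl : b = a := Option.some_injective _ hba
            exact hb
        have h1 : (G.induce D).Reachable ⟨↑a, haD⟩ ⟨c0, hc0D⟩ :=
          hDconn.preconnected _ _
        have h2' := lift _ _ h1
        have e1 : f ⟨↑a, haD⟩ = ⟨some a, hz⟩ := by
          simp only [f, dif_neg a.2]
        have e2 : f ⟨c0, hc0D⟩ = ⟨none, hnone⟩ := by
          simp only [f, dif_pos hc0C]
        rwa [e1, e2] at h2'
    intro u v
    exact (reach u).trans (reach v).symm
  refine ⟨⟨hcov, hconn⟩, ?_⟩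
  -- cardinality
  have hCD : (C \ D).ncard ≤ 1 := by
    by_contra h
    push_neg at h
    obtain ⟨a, ha, b, hb, hab⟩ := (Set.one_lt_ncard (C \ D).toFinite).mp h
    rcases hDcov (hC ha.1 hb.1 hab) with hm | hm
    exacts [ha.2 hm, hb.2 hm]
  have h1 : (some '' S).ncard = S.ncard :=
    Set.ncard_image_of_injective _ (Option.some_injective _)
  have h2' : S.ncard = (D \ C).ncard := by
    rw [← Set.ncard_image_of_injective S Subtype.val_injective]
    congr 1
    ext v
    simp only [Set.mem_image, Set.mem_setOf_eq, Set.mem_diff, Subtype.exists,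
      exists_and_left, hSdef]
    constructor
    · rintro ⟨w, hw, hwC, rfl⟩
      exact ⟨hw, hwC⟩
    · rintro ⟨hv, hvC⟩
      exact ⟨v, hv, hvC, rfl⟩
  have h3 : D'.ncard = (some '' S).ncard + 1 :=
    Set.ncard_insert_of_notMem (by simp) ((some '' S).toFinite)
  have h4 : (D ∩ C).ncard + (D \ C).ncard = D.ncard :=
    Set.ncard_inter_add_ncard_diff_eq_ncard D C D.toFinite
  have h5 : (C ∩ D).ncard + (C \ D).ncard = C.ncard :=
    Set.ncard_inter_add_ncard_diff_eq_ncard C D C.toFinite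
  have h6 : (C ∩ D).ncard = (D ∩ C).ncard := by rw [Set.inter_comm]
  omega
end

section
/- Let G be a finite simple graph and let x and y be distinct non-adjacent vertices of G with N_G(x) = N_G(y) (false twins). If D is a connected vertex cover of the graph G − x with y ∉ D, then D is a connected vertex cover of G. -/
/-- Let G be a finite simple graph and let x and y be distinct non-adjacent
vertices of G with N_G(x) = N_G(y) (false twins). If D is a connected vertex cover of the
graph G − x with y ∉ D, then D is a connected vertex cover of G. -/
theorem stmt_7 {V : Type*} [Fintype V] [DecidableEq V]
    (G : SimpleGraph V) (x y : V) (hxy : x ≠ y) (hnadj : ¬ G.Adj x y)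
    (htwin : G.neighborSet x = G.neighborSet y)
    (D : Set ↥({x}ᶜ : Set V))
    (hyD : (⟨y, Set.mem_compl_singleton_iff.mpr hxy.symm⟩ : ↥({x}ᶜ : Set V)) ∉ D)
    (hD : IsConnectedVertexCover (G.induce ({x}ᶜ : Set V)) D) :
    IsConnectedVertexCover G (Subtype.val '' D) := by
  obtain ⟨hcov, hconn⟩ := hD
  constructor
  · intro u v huv
    by_cases hu : u = x
    · subst hu
      have hvx : v ≠ u := fun h => G.loopless.irrefl _ (h ▸ huv)
      have hyv : G.Adj y v := by
        have : v ∈ G.neighborSet y := htwin ▸ (huv : v ∈ G.neighborSet u)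
        exact this
      have hadj : (G.induce ({u}ᶜ : Set V)).Adj
          ⟨y, Set.mem_compl_singleton_iff.mpr hxy.symm⟩
          ⟨v, Set.mem_compl_singleton_iff.mpr hvx⟩ := hyv
      rcases hcov hadj with h | h
      · exact absurd h hyD
      · exact Or.inr ⟨⟨v, Set.mem_compl_singleton_iff.mpr hvx⟩, h, rfl⟩
    · by_cases hv : v = x
      · subst hv
        have hux : u ≠ v := hu
        have hyu : G.Adj y u := by
          have : u ∈ G.neighborSet y := htwin ▸ (huv.symm : u ∈ G.neighborSet v)
          exact this
        have hadj : (G.induce ({v}ᶜ : Set V)).Adj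
            ⟨y, Set.mem_compl_singleton_iff.mpr hxy.symm⟩
            ⟨u, Set.mem_compl_singleton_iff.mpr hux⟩ := hyu
        rcases hcov hadj with h | h
        · exact absurd h hyD
        · exact Or.inl ⟨⟨u, Set.mem_compl_singleton_iff.mpr hux⟩, h, rfl⟩
      · have hadj : (G.induce ({x}ᶜ : Set V)).Adj
            ⟨u, Set.mem_compl_singleton_iff.mpr hu⟩
            ⟨v, Set.mem_compl_singleton_iff.mpr hv⟩ := huv
        rcases hcov hadj with h | h
        · exact Or.inl ⟨⟨u, Set.mem_compl_singleton_iff.mpr hu⟩, h, rfl⟩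
        · exact Or.inr ⟨⟨v, Set.mem_compl_singleton_iff.mpr hv⟩, h, rfl⟩
  · -- connectivity via iso
    have e : ((G.induce ({x}ᶜ : Set V)).induce D) ≃g (G.induce (Subtype.val '' D)) := by
      refine ⟨Equiv.Set.image Subtype.val D Subtype.val_injective, ?_⟩
      intro a b
      simp [Equiv.Set.image, Equiv.Set.imageOfInjOn]
    exact (e.connected_iff).mp hconn
end

section
/- Let G be a finite simple graph and let x and y be distinct non-adjacent vertices of G with N_G(x) = N_G(y) (false twins). If D is a connected vertex cover of G with x ∈ D and y ∉ D, then (D ∖ {x}) ∪ {y} is a connected vertex cover of G of the same size. -/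
/-- Let G be a finite simple graph and let x and y be distinct non-adjacent
vertices of G with N_G(x) = N_G(y) (false twins). If D is a connected vertex cover of G
with x ∈ D and y ∉ D, then (D ∖ {x}) ∪ {y} is a connected vertex cover of G of the same
size. -/
theorem stmt_8 {V : Type*} [Fintype V] [DecidableEq V]
    (G : SimpleGraph V) (x y : V) (hxy : x ≠ y) (hnadj : ¬ G.Adj x y)
    (htwin : G.neighborSet x = G.neighborSet y)
    (D : Set V) (hD : IsConnectedVertexCover G D) (hxD : x ∈ D) (hyD : y ∉ D) :
    IsConnectedVertexCover G ((D \ {x}) ∪ {y}) ∧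
      ((D \ {x}) ∪ {y}).ncard = D.ncard := by
  have htwin' : ∀ w, G.Adj x w ↔ G.Adj y w := by
    intro w
    have := Set.ext_iff.mp htwin w
    simpa [SimpleGraph.mem_neighborSet] using this
  set σ := Equiv.swap x y with hσ
  have hA : ∀ u v, G.Adj u v → G.Adj (σ u) (σ v) := by
    intro u v huv
    rcases eq_or_ne u x with hux | hux
    · rcases eq_or_ne v y with hvy | hvy
      · exact absurd (hvy ▸ (hux ▸ huv)) hnadj
      · have hvx : v ≠ x := by rintro rfl; exact G.loopless.irrefl v (hux ▸ huv)
        rw [hux, hσ, Equiv.swap_apply_left, Equiv.swap_apply_of_ne_of_ne hvx hvy]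
        exact (htwin' v).mp (hux ▸ huv)
    · rcases eq_or_ne u y with huy | huy
      · have hvx : v ≠ x := by rintro rfl; exact hnadj ((huy ▸ huv) : G.Adj y v).symm
        have hvy : v ≠ y := by rintro rfl; exact G.loopless.irrefl v (huy ▸ huv)
        rw [huy, hσ, Equiv.swap_apply_right, Equiv.swap_apply_of_ne_of_ne hvx hvy]
        exact (htwin' v).mpr (huy ▸ huv)
      · rcases eq_or_ne v x with hvx | hvx
        · rw [hvx, hσ, Equiv.swap_apply_left, Equiv.swap_apply_of_ne_of_ne hux huy]
          exact ((htwin' u).mp (hvx ▸ huv).symm).symm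
        · rcases eq_or_ne v y with hvy | hvy
          · rw [hvy, hσ, Equiv.swap_apply_right, Equiv.swap_apply_of_ne_of_ne hux huy]
            exact ((htwin' u).mpr (hvy ▸ huv).symm).symm
          · rw [hσ, Equiv.swap_apply_of_ne_of_ne hux huy,
              Equiv.swap_apply_of_ne_of_ne hvx hvy]
            exact huv
  have hAiff : ∀ u v, G.Adj (σ u) (σ v) ↔ G.Adj u v := by
    intro u v
    constructor
    · intro h
      have := hA _ _ h
      simpa [hσ] using this
    · exact hA u v
  have himg : σ '' D = (D \ {x}) ∪ {y} := by
    ext w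
    simp only [Set.mem_image, Set.mem_union, Set.mem_diff, Set.mem_singleton_iff]
    constructor
    · rintro ⟨u, huD, rfl⟩
      by_cases hu : u = x
      · subst hu; right; simp [hσ]
      · by_cases hu2 : u = y
        · subst hu2; exact absurd huD hyD
        · left
          rw [hσ, Equiv.swap_apply_of_ne_of_ne hu hu2]
          exact ⟨huD, hu⟩
    · rintro (⟨hwD, hwx⟩ | rfl)
      · by_cases hw2 : w = y
        · subst hw2; exact absurd hwD hyD
        · exact ⟨w, hwD, by rw [hσ, Equiv.swap_apply_of_ne_of_ne hwx hw2]⟩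
      · exact ⟨x, hxD, by simp [hσ]⟩
  rw [← himg]
  refine ⟨⟨?_, ?_⟩, Set.ncard_image_of_injective _ σ.injective⟩
  · intro u v huv
    rcases hD.1 (hA u v huv) with h1 | h1
    · exact Or.inl ⟨σ u, h1, by simp [hσ]⟩
    · exact Or.inr ⟨σ v, h1, by simp [hσ]⟩
  · have e : G.induce D ≃g G.induce (σ '' D) := by
      refine ⟨Equiv.image σ D, ?_⟩
      intro a b
      simp only [SimpleGraph.comap_adj, Function.Embedding.coe_subtype, Equiv.image,
        Equiv.coe_fn_mk]
      exact hAiff a b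
    exact e.connected_iff.mp hD.2
end

section
/- Let G be a finite simple graph and let u be a vertex of G with N_G(u) ≠ ∅. Let G' be the graph obtained from G by deleting the closed neighbourhood N_G[u], adding a new vertex w adjacent exactly to those vertices of V(G) ∖ N_G[u] that have a neighbour (in G) in N_G(u), and adding a (possibly empty) set W of new vertices each adjacent only to w. If D' is a connected vertex cover of G' with w ∈ D', then D := (D' ∖ ({w} ∪ W)) ∪ N_G[u] is a connected vertex cover of G with |D| ≤ |D'| + |N_G(u)|. -/
/-- Let G be a finite simple graph and u a vertex with N_G(u) ≠ ∅. Let G' be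
obtained from G by deleting the closed neighbourhood N_G[u], adding a new vertex w
(modelled as `none`) adjacent exactly to those remaining vertices having a G-neighbour in
N_G(u), and adding a (possibly empty) set W of new vertices each adjacent only to w. If
D' is a connected vertex cover of G' with w ∈ D', then
D := (D' ∖ ({w} ∪ W)) ∪ N_G[u] is a connected vertex cover of G with
|D| ≤ |D'| + |N_G(u)|. -/
theorem stmt_9 {V W : Type*} [Fintype V] [DecidableEq V] [Fintype W] [DecidableEq W]
    (G : SimpleGraph V) (u : V) (hu : (G.neighborSet u).Nonempty)
    (G' : SimpleGraph (Option ({v : V // v ∉ insert u (G.neighborSet u)} ⊕ W)))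
    (hold : ∀ a b : {v : V // v ∉ insert u (G.neighborSet u)},
      G'.Adj (some (Sum.inl a)) (some (Sum.inl b)) ↔ G.Adj ↑a ↑b)
    (hw : ∀ a : {v : V // v ∉ insert u (G.neighborSet u)},
      G'.Adj (some (Sum.inl a)) none ↔ ∃ c : V, G.Adj u c ∧ G.Adj ↑a c)
    (hW1 : ∀ x : W, G'.Adj (some (Sum.inr x)) none)
    (hW2 : ∀ (x : W) (z : {v : V // v ∉ insert u (G.neighborSet u)} ⊕ W),
      ¬ G'.Adj (some (Sum.inr x)) (some z))
    (D' : Set (Option ({v : V // v ∉ insert u (G.neighborSet u)} ⊕ W)))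
    (hwD' : none ∈ D')
    (hD' : IsConnectedVertexCover G' D') :
    IsConnectedVertexCover G
        ({v : V | ∃ h : v ∉ insert u (G.neighborSet u), some (Sum.inl ⟨v, h⟩) ∈ D'}
          ∪ insert u (G.neighborSet u)) ∧
      ({v : V | ∃ h : v ∉ insert u (G.neighborSet u), some (Sum.inl ⟨v, h⟩) ∈ D'}
          ∪ insert u (G.neighborSet u)).ncard
        ≤ D'.ncard + (G.neighborSet u).ncard := by
  classical
  have huD : u ∈ ({v : V | ∃ h : v ∉ insert u (G.neighborSet u), some (Sum.inl ⟨v, h⟩) ∈ D'}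
      ∪ insert u (G.neighborSet u)) := Or.inr (Set.mem_insert _ _)
  have hNuD : ∀ c, G.Adj u c →
      c ∈ ({v : V | ∃ h : v ∉ insert u (G.neighborSet u), some (Sum.inl ⟨v, h⟩) ∈ D'}
        ∪ insert u (G.neighborSet u)) := fun c hc => Or.inr (Set.mem_insert_of_mem _ hc)
  refine ⟨⟨?_, ?_⟩, ?_⟩
  · -- vertex cover
    intro a b hab
    by_cases ha : a ∈ insert u (G.neighborSet u)
    · exact Or.inl (Or.inr ha)
    by_cases hb : b ∈ insert u (G.neighborSet u)
    · exact Or.inr (Or.inr hb)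
    rcases hD'.1 ((hold ⟨a, ha⟩ ⟨b, hb⟩).2 hab) with h | h
    · exact Or.inl (Or.inl ⟨ha, h⟩)
    · exact Or.inr (Or.inl ⟨hb, h⟩)
  · -- connected
    have key : ∀ (x y : ↥D') (p : (G'.induce D').Walk x y), y.val = none →
        ∀ (a : {v : V // v ∉ insert u (G.neighborSet u)}), x.val = some (Sum.inl a) →
        ∃ ha : (a : V) ∈ ({v : V | ∃ h : v ∉ insert u (G.neighborSet u),
            some (Sum.inl ⟨v, h⟩) ∈ D'} ∪ insert u (G.neighborSet u)),
          (G.induce _).Reachable ⟨a, ha⟩ ⟨u, huD⟩ := by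
      intro x y p
      induction p with
      | nil =>
        intro hy a hx
        rw [hy] at hx; exact absurd hx (by simp)
      | @cons x z y hadj p ih =>
        intro hy a hx
        have haD : (a : V) ∈ ({v : V | ∃ h : v ∉ insert u (G.neighborSet u),
            some (Sum.inl ⟨v, h⟩) ∈ D'} ∪ insert u (G.neighborSet u)) := by
          refine Or.inl ⟨a.2, ?_⟩
          have h2 := x.2; rw [hx] at h2; exact h2
        have hadj' : G'.Adj x.val z.val := hadj
        rw [hx] at hadj'
        refine ⟨haD, ?_⟩
        match hz : z.val with
        | none =>
          rw [hz] at hadj'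
          obtain ⟨c, huc, hac⟩ := (hw a).1 hadj'
          have hcD := hNuD c huc
          exact (SimpleGraph.Adj.reachable (by exact hac :
              (G.induce _).Adj ⟨(a : V), haD⟩ ⟨c, hcD⟩)).trans
            (SimpleGraph.Adj.reachable (by exact huc.symm :
              (G.induce _).Adj ⟨c, hcD⟩ ⟨u, huD⟩))
        | some (Sum.inl b) =>
          rw [hz] at hadj'
          have hab : G.Adj a b := (hold a b).1 hadj'
          obtain ⟨hbD, hreach⟩ := ih hy b hz
          exact (SimpleGraph.Adj.reachable (by exact hab :
              (G.induce _).Adj ⟨(a : V), haD⟩ ⟨(b : V), hbD⟩)).trans hreach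
        | some (Sum.inr w') =>
          rw [hz] at hadj'
          exact absurd hadj'.symm (hW2 w' (Sum.inl a))
    have hreach : ∀ x : ↥({v : V | ∃ h : v ∉ insert u (G.neighborSet u),
        some (Sum.inl ⟨v, h⟩) ∈ D'} ∪ insert u (G.neighborSet u)),
        (G.induce _).Reachable x ⟨u, huD⟩ := by
      rintro ⟨v, hv⟩
      rcases hv with hv | hv
      · obtain ⟨h, hmem⟩ := hv
        obtain ⟨p⟩ := hD'.2.preconnected ⟨some (Sum.inl ⟨v, h⟩), hmem⟩ ⟨none, hwD'⟩
        obtain ⟨ha, hr⟩ := key _ _ p rfl ⟨v, h⟩ rfl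
        exact hr
      · rcases hv with rfl | hv
        · exact SimpleGraph.Reachable.refl _
        · exact SimpleGraph.Adj.reachable (by exact G.adj_symm hv :
            (G.induce _).Adj ⟨v, Or.inr (Set.mem_insert_of_mem _ hv)⟩ ⟨u, huD⟩)
    haveI : Nonempty ↥({v : V | ∃ h : v ∉ insert u (G.neighborSet u),
        some (Sum.inl ⟨v, h⟩) ∈ D'} ∪ insert u (G.neighborSet u)) := ⟨⟨u, huD⟩⟩
    exact SimpleGraph.Connected.mk (fun x y => (hreach x).trans (hreach y).symm)
  · -- cardinality
    have hAcard : ({v : V | ∃ h : v ∉ insert u (G.neighborSet u),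
        some (Sum.inl ⟨v, h⟩) ∈ D'}).ncard + 1 ≤ D'.ncard := by
      have h1 : ({v : V | ∃ h : v ∉ insert u (G.neighborSet u),
          some (Sum.inl ⟨v, h⟩) ∈ D'}).ncard ≤ (D' \ {none}).ncard := by
        refine Set.ncard_le_ncard_of_injOn (fun v =>
          if h : v ∉ insert u (G.neighborSet u) then some (Sum.inl ⟨v, h⟩) else none)
          ?_ ?_ (Set.toFinite _)
        · rintro v ⟨h, hmem⟩
          simp only [dif_pos h]
          exact ⟨hmem, by simp⟩
        · rintro v ⟨hv, _⟩ w' ⟨hw'', _⟩ heq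
          simp only [dif_pos hv, dif_pos hw''] at heq
          simpa using heq
      have h2 : (D' \ {none}).ncard + 1 = D'.ncard :=
        Set.ncard_diff_singleton_add_one hwD' (Set.toFinite _)
      omega
    have hNucard : (insert u (G.neighborSet u)).ncard = (G.neighborSet u).ncard + 1 :=
      Set.ncard_insert_of_notMem (by simp) (Set.toFinite _)
    calc ({v : V | ∃ h : v ∉ insert u (G.neighborSet u), some (Sum.inl ⟨v, h⟩) ∈ D'}
          ∪ insert u (G.neighborSet u)).ncard
        ≤ ({v : V | ∃ h : v ∉ insert u (G.neighborSet u), some (Sum.inl ⟨v, h⟩) ∈ D'}).ncard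
          + (insert u (G.neighborSet u)).ncard := Set.ncard_union_le _ _
      _ ≤ D'.ncard + (G.neighborSet u).ncard := by omega
end

section
/- Let G be a finite simple graph and let u be a vertex of G with N_G(u) ≠ ∅. Let G' be the graph obtained from G by deleting the closed neighbourhood N_G[u], adding a new vertex w adjacent exactly to those vertices of V(G) ∖ N_G[u] that have a neighbour (in G) in N_G(u), and adding a (possibly empty) set W of new vertices each adjacent only to w. If D is a connected vertex cover of G with N_G(u) ⊆ D, then (D ∖ N_G[u]) ∪ {w} is a connected vertex cover of G' of size at most |D| − |N_G(u)| + 1. -/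
/-- Let G be a finite simple graph and u a vertex with N_G(u) ≠ ∅. Let G'
be obtained from G by deleting the closed neighbourhood N_G[u], adding a new vertex w
(modelled as `none`) adjacent exactly to those remaining vertices having a G-neighbour in
N_G(u), and adding a (possibly empty) set W of new vertices each adjacent only to w. If
D is a connected vertex cover of G with N_G(u) ⊆ D, then (D ∖ N_G[u]) ∪ {w} is a
connected vertex cover of G' of size at most |D| − |N_G(u)| + 1. -/
theorem stmt_10 {V W : Type*} [Fintype V] [DecidableEq V] [Fintype W] [DecidableEq W]
    (G : SimpleGraph V) (u : V) (hu : (G.neighborSet u).Nonempty)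
    (G' : SimpleGraph (Option ({v : V // v ∉ insert u (G.neighborSet u)} ⊕ W)))
    (hold : ∀ a b : {v : V // v ∉ insert u (G.neighborSet u)},
      G'.Adj (some (Sum.inl a)) (some (Sum.inl b)) ↔ G.Adj ↑a ↑b)
    (hw : ∀ a : {v : V // v ∉ insert u (G.neighborSet u)},
      G'.Adj (some (Sum.inl a)) none ↔ ∃ c : V, G.Adj u c ∧ G.Adj ↑a c)
    (hW1 : ∀ x : W, G'.Adj (some (Sum.inr x)) none)
    (hW2 : ∀ (x : W) (z : {v : V // v ∉ insert u (G.neighborSet u)} ⊕ W),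
      ¬ G'.Adj (some (Sum.inr x)) (some z))
    (D : Set V) (hD : IsConnectedVertexCover G D) (hND : G.neighborSet u ⊆ D) :
    IsConnectedVertexCover G'
        (insert none ((fun a : {v : V // v ∉ insert u (G.neighborSet u)} =>
          (some (Sum.inl a) : Option ({v : V // v ∉ insert u (G.neighborSet u)} ⊕ W)))
            '' {a : {v : V // v ∉ insert u (G.neighborSet u)} | ↑a ∈ D})) ∧
      (insert none ((fun a : {v : V // v ∉ insert u (G.neighborSet u)} =>
          (some (Sum.inl a) : Option ({v : V // v ∉ insert u (G.neighborSet u)} ⊕ W)))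
            '' {a : {v : V // v ∉ insert u (G.neighborSet u)} | ↑a ∈ D})).ncard
        ≤ D.ncard - (G.neighborSet u).ncard + 1 := by
  classical
  obtain ⟨hDcov, hDconn⟩ := hD
  obtain ⟨s, hs⟩ := hu
  let T := {v : V // v ∉ insert u (G.neighborSet u)}
  let D' : Set (Option (T ⊕ W)) :=
    insert none ((fun a : T => (some (Sum.inl a) : Option (T ⊕ W))) ''
      {a : T | ↑a ∈ D})
  show IsConnectedVertexCover G' D' ∧ D'.ncard ≤ D.ncard - (G.neighborSet u).ncard + 1
  have hnone : (none : Option (T ⊕ W)) ∈ D' := Set.mem_insert _ _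
  have hmemD' : ∀ (a : T), (↑a : V) ∈ D → (some (Sum.inl a) : Option (T ⊕ W)) ∈ D' :=
    fun a ha => Set.mem_insert_of_mem _ ⟨a, ha, rfl⟩
  have hsD : s ∈ D := hND hs
  -- key reachability
  have aux : ∀ (y z : ↥D) (p : (G.induce D).Walk y z),
      (↑z : V) ∈ G.neighborSet u → ∀ hy : (↑y : V) ∉ insert u (G.neighborSet u),
      (G'.induce D').Reachable ⟨none, hnone⟩
        ⟨some (Sum.inl ⟨↑y, hy⟩), hmemD' ⟨↑y, hy⟩ y.2⟩ := by
    intro y z p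
    induction p with
    | nil =>
      intro hz hy
      exact absurd (Set.mem_insert_of_mem _ hz) hy
    | @cons y y' z h q ih =>
      intro hz hy
      have hadj : G.Adj ↑y ↑y' := h
      by_cases hy' : (↑y' : V) ∈ insert u (G.neighborSet u)
      · rcases hy' with hy'u | hy'n
        · exfalso
          apply hy
          apply Set.mem_insert_of_mem
          rw [hy'u] at hadj
          exact hadj.symm
        · -- edge from inl y to none
          have hedge : G'.Adj (some (Sum.inl ⟨↑y, hy⟩)) none :=
            (hw ⟨↑y, hy⟩).mpr ⟨↑y', hy'n, hadj⟩
          have : (G'.induce D').Adj ⟨none, hnone⟩ ⟨some (Sum.inl ⟨↑y, hy⟩), hmemD' _ y.2⟩ :=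
            hedge.symm
          exact this.reachable
      · have h1 := ih hz hy'
        have hedge : (G'.induce D').Adj
            ⟨some (Sum.inl ⟨↑y', hy'⟩), hmemD' _ y'.2⟩
            ⟨some (Sum.inl ⟨↑y, hy⟩), hmemD' _ y.2⟩ :=
          (hold ⟨↑y', hy'⟩ ⟨↑y, hy⟩).mpr hadj.symm
        exact h1.trans hedge.reachable
  have key : ∀ (x : T) (hx : (↑x : V) ∈ D),
      (G'.induce D').Reachable ⟨none, hnone⟩ ⟨some (Sum.inl x), hmemD' x hx⟩ := by
    intro x hx
    obtain ⟨p⟩ := hDconn ⟨↑x, hx⟩ ⟨s, hsD⟩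
    have := aux ⟨↑x, hx⟩ ⟨s, hsD⟩ p hs x.2
    convert this using 2
  have reach : ∀ v : ↥D', (G'.induce D').Reachable ⟨none, hnone⟩ v := by
    rintro ⟨v, hv⟩
    match v with
    | none => rfl
    | some (Sum.inl a) =>
      rcases hv with hv | ⟨a', ha', heq⟩
      · exact absurd hv (by simp)
      · have : a' = a := by
          simpa using heq
        subst this
        exact key a' ha'
    | some (Sum.inr x) =>
      rcases hv with hv | ⟨a', ha', heq⟩
      · exact absurd hv (by simp)
      · simp at heq
  refine ⟨⟨?_, ?_⟩, ?_⟩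
  · -- vertex cover
    rintro a b hab
    match a, b with
    | none, _ => exact Or.inl hnone
    | _, none => exact Or.inr hnone
    | some (Sum.inr x), some z => exact absurd hab (hW2 x z)
    | some z, some (Sum.inr x) => exact absurd hab.symm (hW2 x z)
    | some (Sum.inl a), some (Sum.inl b) =>
      rcases hDcov ((hold a b).mp hab) with h | h
      · exact Or.inl (hmemD' a h)
      · exact Or.inr (hmemD' b h)
  · -- connected
    haveI : Nonempty ↥D' := ⟨⟨none, hnone⟩⟩
    exact SimpleGraph.Connected.mk (fun a b => (reach a).symm.trans (reach b))
  · -- cardinality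
    have hinj : Function.Injective (fun a : T => (some (Sum.inl a) : Option (T ⊕ W))) := by
      intro a b h
      simpa using h
    have hnotmem : (none : Option (T ⊕ W)) ∉
        ((fun a : T => (some (Sum.inl a) : Option (T ⊕ W))) '' {a : T | ↑a ∈ D}) := by
      rintro ⟨a, _, h⟩
      simp at h
    rw [Set.ncard_insert_of_notMem hnotmem,
      Set.ncard_image_of_injective _ hinj]
    have h1 : ({a : T | ↑a ∈ D}).ncard = ((Subtype.val) '' {a : T | ↑a ∈ D}).ncard :=
      (Set.ncard_image_of_injective _ Subtype.val_injective).symm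
    have h2 : (Subtype.val : T → V) '' {a : T | ↑a ∈ D} ⊆ D \ G.neighborSet u := by
      rintro v ⟨a, ha, rfl⟩
      exact ⟨ha, fun hn => a.2 (Set.mem_insert_of_mem _ hn)⟩
    have h3 : (D \ G.neighborSet u).ncard = D.ncard - (G.neighborSet u).ncard :=
      Set.ncard_diff hND
    have h4 := Set.ncard_le_ncard h2 (Set.toFinite _)
    omega
end

section
/- Let G be a finite simple connected graph with |V(G)| ≥ 2, let k ≥ 1 and d ≥ 2 be integers, and let S ⊆ V(G) with |S| ≤ k be such that V(G) ∖ S can be partitioned into a clique C with |C| ≤ d − 1 and an independent set I. Define B = {v ∈ V(G) : deg_G(v) ≥ 2k + d} and I_B = {v ∈ V(G) ∖ B : N_G(v) ⊆ B}. Suppose that (i) every vertex of I_B ∖ S has degree at most d − 1 in G, and (ii) for every set B' ⊆ B there are at most 2k + d vertices v ∈ I_B ∖ S with N_G(v) = B'. Then |V(G)| ≤ k + 3(2k + d)^2 + d · (2k + d)^d. -/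
/-- Let G be a finite simple connected graph with |V(G)| ≥ 2, let k ≥ 1 and
d ≥ 2 be integers, and let S ⊆ V(G) with |S| ≤ k be such that V(G) ∖ S can be partitioned
into a clique C with |C| ≤ d − 1 and an independent set I. Define
B = {v : deg_G(v) ≥ 2k + d} and I_B = {v ∉ B : N_G(v) ⊆ B}. Suppose (i) every vertex of
I_B ∖ S has degree at most d − 1 in G, and (ii) for every set B' ⊆ B there are at most
2k + d vertices v ∈ I_B ∖ S with N_G(v) = B'. Then |V(G)| ≤ k + 3(2k+d)² + d·(2k+d)^d. -/
theorem stmt_11 {V : Type*} [Fintype V] [DecidableEq V]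
    (G : SimpleGraph V) [DecidableRel G.Adj] (hconn : G.Connected)
    (hV : 2 ≤ Fintype.card V) (k d : ℕ) (hk : 1 ≤ k) (hd : 2 ≤ d)
    (S C I : Set V) (hS : S.ncard ≤ k)
    (hpart : C ∪ I = Sᶜ) (hdisj : Disjoint C I)
    (hC : G.IsClique C) (hCcard : C.ncard ≤ d - 1)
    (hI : ∀ u ∈ I, ∀ v ∈ I, ¬ G.Adj u v)
    (hdeg : ∀ v : V, v ∉ S → G.degree v < 2 * k + d →
      (∀ w : V, G.Adj v w → 2 * k + d ≤ G.degree w) → G.degree v ≤ d - 1)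
    (htwins : ∀ B' : Set V, B' ⊆ {v : V | 2 * k + d ≤ G.degree v} →
      {v : V | v ∉ S ∧ G.degree v < 2 * k + d ∧
        (∀ w : V, G.Adj v w → 2 * k + d ≤ G.degree w) ∧
        G.neighborSet v = B'}.ncard ≤ 2 * k + d) :
    Fintype.card V ≤ k + 3 * (2 * k + d) ^ 2 + d * (2 * k + d) ^ d := by
  classical
  set m := 2 * k + d with hmdef
  have hm2 : 2 ≤ m := by omega
  -- finset versions of S, C, I
  let Sf : Finset V := Finset.univ.filter (· ∈ S)
  let Cf : Finset V := Finset.univ.filter (· ∈ C)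
  let If : Finset V := Finset.univ.filter (· ∈ I)
  have hSf : Sf.card ≤ k := by
    have : Sf.card = S.ncard := by
      rw [← Set.ncard_coe_finset]
      congr 1
      ext v; simp [Sf]
    omega
  have hCf : Cf.card ≤ d - 1 := by
    have : Cf.card = C.ncard := by
      rw [← Set.ncard_coe_finset]
      congr 1
      ext v; simp [Cf]
    omega
  have hcover : ∀ v : V, v ∈ S ∨ v ∈ C ∨ v ∈ I := by
    intro v
    by_cases h : v ∈ S
    · exact Or.inl h
    · have : v ∈ C ∪ I := by rw [hpart]; exact h
      exact Or.inr this
  have hInotS : ∀ v ∈ I, v ∉ S := by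
    intro v hv hvS
    have : v ∈ Sᶜ := by rw [← hpart]; exact Or.inr hv
    exact this hvS
  -- every vertex of I has small degree
  have hIdeg : ∀ v ∈ I, G.degree v < m := by
    intro v hv
    have hsub : G.neighborFinset v ⊆ Sf ∪ Cf := by
      intro w hw
      rw [SimpleGraph.mem_neighborFinset] at hw
      have hwI : w ∉ I := fun hwI => hI v hv w hwI hw
      rcases hcover w with h | h | h
      · exact Finset.mem_union_left _ (by simp [Sf, h])
      · exact Finset.mem_union_right _ (by simp [Cf, h])
      · exact absurd h hwI
    have := Finset.card_le_card hsub
    have hub := Finset.card_union_le Sf Cf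
    rw [← SimpleGraph.card_neighborFinset_eq_degree]
    omega
  -- B, the high-degree vertices
  let Bf : Finset V := Finset.univ.filter (fun v => m ≤ G.degree v)
  have hBcard : Bf.card ≤ m := by
    have hsub : Bf ⊆ Sf ∪ Cf := by
      intro v hv
      have hvdeg : m ≤ G.degree v := by simpa [Bf] using hv
      rcases hcover v with h | h | h
      · exact Finset.mem_union_left _ (by simp [Sf, h])
      · exact Finset.mem_union_right _ (by simp [Cf, h])
      · exact absurd hvdeg (not_le.mpr (hIdeg v h))
    have := Finset.card_le_card hsub
    have hub := Finset.card_union_le Sf Cf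
    omega
  -- T1 = I_B \ S,  T2 = neighbours of low-degree vertices in S ∪ C
  let T1 : Finset V := Finset.univ.filter (fun v => v ∉ S ∧ G.degree v < m ∧
      ∀ w, G.Adj v w → m ≤ G.degree w)
  let T2 : Finset V := ((Sf ∪ Cf).filter (fun w => G.degree w < m)).biUnion
      (fun w => G.neighborFinset w)
  have hIsub : If ⊆ T1 ∪ T2 := by
    intro v hv
    have hvI : v ∈ I := by simpa [If] using hv
    have hvS : v ∉ S := hInotS v hvI
    have hvdeg : G.degree v < m := hIdeg v hvI
    by_cases hall : ∀ w, G.Adj v w → m ≤ G.degree w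
    · exact Finset.mem_union_left _ (Finset.mem_filter.mpr ⟨Finset.mem_univ v, hvS, hvdeg, hall⟩)
    · push_neg at hall
      obtain ⟨w, hadj, hwdeg⟩ := hall
      have hwI : w ∉ I := fun hwI => hI v hvI w hwI hadj
      have hwSC : w ∈ Sf ∪ Cf := by
        rcases hcover w with h | h | h
        · exact Finset.mem_union_left _ (by simp [Sf, h])
        · exact Finset.mem_union_right _ (by simp [Cf, h])
        · exact absurd h hwI
      refine Finset.mem_union_right _ (Finset.mem_biUnion.mpr ⟨w, ?_, ?_⟩)
      · exact Finset.mem_filter.mpr ⟨hwSC, hwdeg⟩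
      · rw [SimpleGraph.mem_neighborFinset]; exact hadj.symm
  -- bound on T2
  have hT2 : T2.card ≤ m * m := by
    have h1 : T2.card ≤ ((Sf ∪ Cf).filter (fun w => G.degree w < m)).card * m := by
      refine Finset.card_biUnion_le.trans ?_
      refine (Finset.sum_le_card_nsmul _ _ m ?_).trans (by simp [mul_comm])
      intro w hw
      have : G.degree w < m := (Finset.mem_filter.mp hw).2
      rw [SimpleGraph.card_neighborFinset_eq_degree]
      omega
    have h2 : ((Sf ∪ Cf).filter (fun w => G.degree w < m)).card ≤ m := by
      have := Finset.card_filter_le (Sf ∪ Cf) (fun w => G.degree w < m)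
      have hub := Finset.card_union_le Sf Cf
      omega
    calc T2.card ≤ ((Sf ∪ Cf).filter (fun w => G.degree w < m)).card * m := h1
      _ ≤ m * m := Nat.mul_le_mul_right m h2
  -- bound on T1
  have hT1 : T1.card ≤ d * m ^ d := by
    have hmem : ∀ v ∈ T1, v ∉ S ∧ G.degree v < m ∧ ∀ w, G.Adj v w → m ≤ G.degree w := by
      intro v hv; simpa [T1] using hv
    -- the image of neighbourhoods lies among subsets of Bf of size < d
    have himg : T1.image (fun v => G.neighborFinset v) ⊆
        (Finset.range d).biUnion (fun i => Bf.powersetCard i) := by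
      intro t ht
      obtain ⟨v, hv, rfl⟩ := Finset.mem_image.mp ht
      obtain ⟨hvS, hvdeg, hall⟩ := hmem v hv
      have hcard : (G.neighborFinset v).card < d := by
        have := hdeg v hvS hvdeg hall
        rw [SimpleGraph.card_neighborFinset_eq_degree]
        omega
      refine Finset.mem_biUnion.mpr ⟨(G.neighborFinset v).card, Finset.mem_range.mpr hcard, ?_⟩
      refine Finset.mem_powersetCard.mpr ⟨?_, rfl⟩
      intro w hw
      rw [SimpleGraph.mem_neighborFinset] at hw
      simp [Bf, hall w hw]
    have himgcard : (T1.image (fun v => G.neighborFinset v)).card ≤ d * m ^ (d - 1) := by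
      refine (Finset.card_le_card himg).trans ?_
      refine Finset.card_biUnion_le.trans ?_
      refine (Finset.sum_le_card_nsmul _ _ (m ^ (d - 1)) ?_).trans (by simp [mul_comm])
      intro i hi
      rw [Finset.card_powersetCard]
      calc Bf.card.choose i ≤ Bf.card ^ i := Nat.choose_le_pow _ _
        _ ≤ m ^ i := Nat.pow_le_pow_left hBcard i
        _ ≤ m ^ (d - 1) := Nat.pow_le_pow_right (by omega)
              (by have := Finset.mem_range.mp hi; omega)
    have hfiber : ∀ t ∈ T1.image (fun v => G.neighborFinset v),
        (T1.filter (fun v => G.neighborFinset v = t)).card ≤ m := by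
      intro t ht
      obtain ⟨v₀, hv₀, rfl⟩ := Finset.mem_image.mp ht
      obtain ⟨_, _, hall₀⟩ := hmem v₀ hv₀
      have hsub : (↑(G.neighborFinset v₀) : Set V) ⊆ {v : V | m ≤ G.degree v} := by
        intro w hw
        simp only [Finset.coe_sort_coe, Finset.mem_coe, SimpleGraph.mem_neighborFinset] at hw
        exact hall₀ w hw
      have := htwins (↑(G.neighborFinset v₀)) hsub
      have heq : {v : V | v ∉ S ∧ G.degree v < m ∧
          (∀ w : V, G.Adj v w → m ≤ G.degree w) ∧
          G.neighborSet v = ↑(G.neighborFinset v₀)} =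
          ↑(T1.filter (fun v => G.neighborFinset v = G.neighborFinset v₀)) := by
        ext v
        simp only [Set.mem_setOf_eq, Finset.coe_filter, T1, Finset.mem_filter,
          Finset.mem_univ, true_and]
        constructor
        · rintro ⟨h1, h2, h3, h4⟩
          refine ⟨⟨h1, h2, h3⟩, ?_⟩
          apply Finset.coe_injective
          rw [SimpleGraph.neighborFinset_def, Set.coe_toFinset, h4]
        · rintro ⟨⟨h1, h2, h3⟩, h4⟩
          refine ⟨h1, h2, h3, ?_⟩
          rw [← h4, SimpleGraph.neighborFinset_def, Set.coe_toFinset]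
      rw [heq, Set.ncard_coe_finset] at this
      exact this
    have := Finset.card_le_mul_card_image T1 m hfiber
    calc T1.card ≤ m * (T1.image (fun v => G.neighborFinset v)).card := this
      _ ≤ m * (d * m ^ (d - 1)) := Nat.mul_le_mul_left m himgcard
      _ = d * (m * m ^ (d - 1)) := by ring
      _ = d * m ^ d := by
          congr 1
          rw [← pow_succ']
          congr 1
          omega
  -- put everything together
  have hIf : If.card ≤ d * m ^ d + m * m := by
    have := Finset.card_le_card hIsub
    have := Finset.card_union_le T1 T2
    omega
  have huniv : (Finset.univ : Finset V) ⊆ Sf ∪ Cf ∪ If := by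
    intro v _
    rcases hcover v with h | h | h
    · exact Finset.mem_union_left _ (Finset.mem_union_left _ (by simp [Sf, h]))
    · exact Finset.mem_union_left _ (Finset.mem_union_right _ (by simp [Cf, h]))
    · exact Finset.mem_union_right _ (by simp [If, h])
  have hcardV : Fintype.card V ≤ Sf.card + Cf.card + If.card := by
    have h1 := Finset.card_le_card huniv
    have h2 := Finset.card_union_le (Sf ∪ Cf) If
    have h3 := Finset.card_union_le Sf Cf
    rw [Finset.card_univ] at h1
    omega
  have hmm : m ≤ m ^ 2 := by nlinarith
  have hmsq : m * m = m ^ 2 := by ring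
  omega
end

section
/- Let G be a finite simple graph with vertex set V and let k ≥ 1 be an integer. Let G' be the graph with vertex set (V × {1, …, k}) ∪ {x, y}, where x and y are two new vertices, in which two distinct vertices (v, i) and (u, j) are adjacent if and only if i = j, or u = v, or {u, v} is an edge of G; the vertex x is adjacent to every other vertex of G'; and y is adjacent only to x. Then G has an independent set of size k if and only if G' has an independent set S' of size k + 1 such that V(G') ∖ S' is a connected vertex cover of G'. -/
/-- Let G be a finite simple graph and k ≥ 1. Let G' be the graph on
(V × {1,…,k}) ∪ {x, y} (x = `Sum.inr true`, y = `Sum.inr false`) in which distinct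
vertices (v,i) and (u,j) are adjacent iff i = j, or u = v, or {u,v} ∈ E(G); x is adjacent
to every other vertex; and y is adjacent only to x. Then G has an independent set of size
k iff G' has an independent set S' of size k + 1 whose complement is a connected vertex
cover of G'. -/
theorem stmt_12 {V : Type*} [Fintype V] [DecidableEq V]
    (G : SimpleGraph V) (k : ℕ) (hk : 1 ≤ k)
    (G' : SimpleGraph ((V × Fin k) ⊕ Bool))
    (hinl : ∀ p q : V × Fin k, p ≠ q →
      (G'.Adj (Sum.inl p) (Sum.inl q) ↔ p.2 = q.2 ∨ p.1 = q.1 ∨ G.Adj p.1 q.1))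
    (hx : ∀ z : (V × Fin k) ⊕ Bool, z ≠ Sum.inr true → G'.Adj (Sum.inr true) z)
    (hy : ∀ p : V × Fin k, ¬ G'.Adj (Sum.inr false) (Sum.inl p)) :
    (∃ s : Finset V, s.card = k ∧ ∀ u ∈ s, ∀ v ∈ s, ¬ G.Adj u v) ↔
      (∃ S' : Finset ((V × Fin k) ⊕ Bool), S'.card = k + 1 ∧
        (∀ a ∈ S', ∀ b ∈ S', ¬ G'.Adj a b) ∧
        IsConnectedVertexCover G' ((↑S' : Set ((V × Fin k) ⊕ Bool))ᶜ)) := by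
  constructor
  · rintro ⟨s, hcard, hind⟩
    have e : Fin k ≃ {x // x ∈ s} := (s.equivFin.trans (finCongr hcard)).symm
    set f : Fin k → V := fun i => (e i : V) with hf
    have hfmem : ∀ i, f i ∈ s := fun i => (e i).2
    have hfinj : Function.Injective f := fun i j h => e.injective (Subtype.ext h)
    set S' : Finset ((V × Fin k) ⊕ Bool) :=
      (Finset.univ.image fun i : Fin k => (Sum.inl (f i, i) : (V × Fin k) ⊕ Bool)) ∪
        {Sum.inr false} with hS'
    have hmem : ∀ a, a ∈ S' ↔ (∃ i, a = Sum.inl (f i, i)) ∨ a = Sum.inr false := by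
      intro a
      simp [hS', eq_comm]
      exact or_comm
    have hginj : Function.Injective fun i : Fin k => (Sum.inl (f i, i) : (V × Fin k) ⊕ Bool) := by
      intro i j h
      simpa using congrArg (fun a => Sum.elim (fun p : V × Fin k => p.2) (fun _ => i) a) h
    have hScard : S'.card = k + 1 := by
      rw [hS', Finset.card_union_of_disjoint (by simp), Finset.card_image_of_injective _ hginj]
      simp
    have hSind : ∀ a ∈ S', ∀ b ∈ S', ¬ G'.Adj a b := by
      intro a ha b hb hadj
      rcases (hmem a).1 ha with ⟨i, rfl⟩ | rfl <;> rcases (hmem b).1 hb with ⟨j, rfl⟩ | rfl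
      · by_cases hpq : ((f i, i) : V × Fin k) = (f j, j)
        · rw [hpq] at hadj; exact G'.irrefl hadj
        · rcases (hinl _ _ hpq).1 hadj with h | h | h
          · exact hpq (by simp at h; simp [h])
          · exact hpq (by simp at h; simp [hfinj h])
          · exact hind _ (hfmem i) _ (hfmem j) h
      · exact hy _ hadj.symm
      · exact hy _ hadj
      · exact G'.irrefl hadj
    refine ⟨S', hScard, hSind, ?_, ?_⟩
    · intro u v huv
      by_contra hc
      push_neg at hc
      simp only [Set.mem_compl_iff, Finset.mem_coe, not_not] at hc
      exact hSind u hc.1 v hc.2 huv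
    · have hxX : (Sum.inr true : (V × Fin k) ⊕ Bool) ∈ ((↑S' : Set ((V × Fin k) ⊕ Bool))ᶜ) := by
        simp only [Set.mem_compl_iff, Finset.mem_coe, hmem]
        push_neg
        exact ⟨fun i => by simp, by simp⟩
      haveI : Nonempty ((↑S' : Set ((V × Fin k) ⊕ Bool))ᶜ : Set _) := ⟨⟨_, hxX⟩⟩
      have key : ∀ a : ((↑S' : Set ((V × Fin k) ⊕ Bool))ᶜ : Set _),
          (G'.induce _).Reachable a ⟨Sum.inr true, hxX⟩ := by
        rintro ⟨a, ha⟩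
        by_cases hax : a = Sum.inr true
        · subst hax; exact SimpleGraph.Reachable.refl _
        · exact SimpleGraph.Adj.reachable (show G'.Adj a (Sum.inr true) from (hx a hax).symm)
      exact ⟨fun u v => (key u).trans (key v).symm⟩
  · rintro ⟨S', hScard, hSind, _⟩
    have hxnot : (Sum.inr true : (V × Fin k) ⊕ Bool) ∉ S' := by
      intro hxS
      have h1 : 1 < S'.card := by omega
      obtain ⟨b, hb, hbne⟩ := Finset.exists_mem_ne h1 (Sum.inr true)
      exact hSind _ hxS _ hb (hx b hbne)
    set T : Finset (V × Fin k) := S'.preimage Sum.inl Sum.inl_injective.injOn with hT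
    have hTmem : ∀ p, p ∈ T ↔ Sum.inl p ∈ S' := fun p => Finset.mem_preimage
    have hsnd : Set.InjOn Prod.snd (T : Set (V × Fin k)) := by
      intro p hp q hq h
      by_contra hpq
      exact hSind _ ((hTmem p).1 hp) _ ((hTmem q).1 hq) ((hinl p q hpq).2 (Or.inl h))
    have hfst : Set.InjOn Prod.fst (T : Set (V × Fin k)) := by
      intro p hp q hq h
      by_contra hpq
      exact hSind _ ((hTmem p).1 hp) _ ((hTmem q).1 hq) ((hinl p q hpq).2 (Or.inr (Or.inl h)))
    have hTle : T.card ≤ k := by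
      calc T.card = (T.image Prod.snd).card := (Finset.card_image_of_injOn hsnd).symm
        _ ≤ Fintype.card (Fin k) := Finset.card_le_univ _
        _ = k := Fintype.card_fin k
    have hsub : S' ⊆ T.image Sum.inl ∪ {Sum.inr false} := by
      intro a ha
      rcases a with p | b
      · exact Finset.mem_union_left _ (Finset.mem_image.2 ⟨p, (hTmem p).2 ha, rfl⟩)
      · cases b
        · exact Finset.mem_union_right _ (by simp)
        · exact absurd ha hxnot
    have hTge : k ≤ T.card := by
      have := Finset.card_le_card hsub
      have h2 := Finset.card_union_le (T.image Sum.inl) {(Sum.inr false : (V × Fin k) ⊕ Bool)}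
      rw [Finset.card_image_of_injective _ Sum.inl_injective] at h2
      simp only [Finset.card_singleton] at h2
      omega
    refine ⟨T.image Prod.fst, ?_, ?_⟩
    · rw [Finset.card_image_of_injOn hfst]; omega
    · intro u hu v hv hadj
      obtain ⟨p, hp, rfl⟩ := Finset.mem_image.1 hu
      obtain ⟨q, hq, rfl⟩ := Finset.mem_image.1 hv
      have hpq : p ≠ q := fun h => hadj.ne (congrArg Prod.fst h)
      exact hSind _ ((hTmem p).1 hp) _ ((hTmem q).1 hq)
        ((hinl p q hpq).2 (Or.inr (Or.inr hadj)))
end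

section
/- Let G be a finite simple connected graph with at least one edge, let k ≥ 1 be an integer, and let S ⊆ V(G) with |S| ≤ k be such that every connected component of G − S is a clique. Let C_1, …, C_t be the connected components of G − S having at least 2 vertices, and let c = Σ_{i=1}^{t} (|C_i| − 1). Then G has a connected vertex cover of size at most 2k − 1 + c. -/
open SimpleGraph


lemma reach_induce_of_walk {V : Type*} {G : SimpleGraph V} {A : Set V} :
    ∀ {x y : V} (p : G.Walk x y), (∀ z ∈ p.support, z ∈ A) →
      ∀ (hx : x ∈ A) (hy : y ∈ A), (G.induce A).Reachable ⟨x, hx⟩ ⟨y, hy⟩ := by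
  intro x y p
  induction p with
  | nil => exact fun _ _ _ => Reachable.refl _
  | @cons a b cc h q ih =>
    intro hsup hx hy
    have hb : b ∈ A := hsup b (by simp)
    have hadj : (G.induce A).Adj ⟨a, hx⟩ ⟨b, hb⟩ := h
    exact hadj.reachable.trans (ih (fun z hz => hsup z (by simp [hz])) hb hy)

lemma exists_adj_set {V : Type*} {G : SimpleGraph V} {S : Set V} :
    ∀ (n : ℕ) {x z : V} (hx : x ∈ Sᶜ), z ∈ S → ∀ (p : G.Walk x z), p.length ≤ n →
    ∃ y : ↥(Sᶜ), (∃ s ∈ S, G.Adj ↑y s) ∧ (G.induce Sᶜ).Reachable ⟨x, hx⟩ y := by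
  intro n
  induction n with
  | zero =>
    intro x z hx hz p hp
    have hxz : x = z := p.eq_of_length_eq_zero (Nat.le_zero.mp hp)
    exact absurd (hxz ▸ hz) hx
  | succ n ih =>
    intro x z hx hz p hp
    cases p with
    | nil => exact absurd hz hx
    | @cons _ b _ h q =>
      by_cases hb : b ∈ S
      · exact ⟨⟨x, hx⟩, ⟨b, hb, h⟩, Reachable.refl _⟩
      · have hb' : b ∈ Sᶜ := hb
        simp only [SimpleGraph.Walk.length_cons] at hp
        obtain ⟨y, hy1, hy2⟩ := ih hb' hz q (by omega)
        have hadj : (G.induce Sᶜ).Adj ⟨x, hx⟩ ⟨b, hb'⟩ := h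
        exact ⟨y, hy1, hadj.reachable.trans hy2⟩

lemma exists_connector {V : Type*} {G : SimpleGraph V} {X : Set V} (hX : _root_.IsVertexCover G X) :
    ∀ (n : ℕ) {a b : V} (ha : a ∈ X) (hb : b ∈ X) (p : G.Walk a b), p.length ≤ n →
    ¬ (G.induce X).Reachable ⟨a, ha⟩ ⟨b, hb⟩ →
    ∃ w, w ∉ X ∧ ∃ a' b' : ↥X, G.Adj w ↑a' ∧ G.Adj w ↑b' ∧ ¬ (G.induce X).Reachable a' b' := by
  intro n
  induction n with
  | zero =>
    intro a b ha hb p hp hr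
    have hab : a = b := p.eq_of_length_eq_zero (Nat.le_zero.mp hp)
    subst hab
    exact absurd (Reachable.refl _) hr
  | succ n ih =>
    intro a b ha hb p hp hr
    cases p with
    | nil => exact absurd (Reachable.refl _) hr
    | @cons _ x' _ h q =>
      simp only [SimpleGraph.Walk.length_cons] at hp
      by_cases hx' : x' ∈ X
      · have hadj : (G.induce X).Adj ⟨a, ha⟩ ⟨x', hx'⟩ := h
        exact ih hx' hb q (by omega) (fun r => hr (hadj.reachable.trans r))
      · cases q with
        | nil => exact absurd hb hx'
        | @cons _ x'' _ h2 q2 =>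
          simp only [SimpleGraph.Walk.length_cons] at hp
          have hx'' : x'' ∈ X := (hX h2).resolve_left hx'
          by_cases hr3 : (G.induce X).Reachable ⟨a, ha⟩ ⟨x'', hx''⟩
          · exact ih hx'' hb q2 (by omega) (fun r => hr (hr3.trans r))
          · exact ⟨x', hx', ⟨a, ha⟩, ⟨x'', hx''⟩, h.symm, h2, hr3⟩

lemma extend_to_connected {V : Type*} [Fintype V] {G : SimpleGraph V} (hG : G.Connected) :
    ∀ (n : ℕ) (X : Set V), _root_.IsVertexCover G X → X.Nonempty →
      Nat.card (G.induce X).ConnectedComponent ≤ n + 1 →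
      ∃ T : Set V, X ⊆ T ∧ _root_.IsVertexCover G T ∧ (G.induce T).Connected ∧
        T.ncard ≤ X.ncard + n := by
  classical
  intro n
  induction n with
  | zero =>
    intro X hvc hne hcard
    haveI : Nonempty ↥X := hne.to_subtype
    haveI : Fintype (G.induce X).ConnectedComponent := Fintype.ofFinite _
    haveI hss : Subsingleton (G.induce X).ConnectedComponent :=
      (Fintype.card_le_one_iff_subsingleton).mp (by rwa [Nat.card_eq_fintype_card] at hcard)
    refine ⟨X, subset_rfl, hvc, ?_, by simp⟩
    rw [connected_iff]
    exact ⟨fun u v => ConnectedComponent.exact (Subsingleton.elim _ _), inferInstance⟩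
  | succ n ih =>
    intro X hvc hne hcard
    by_cases hc : (G.induce X).Connected
    · exact ⟨X, subset_rfl, hvc, hc, by omega⟩
    haveI : Nonempty ↥X := hne.to_subtype
    have hnp : ¬ (G.induce X).Preconnected := fun hp => hc ((connected_iff _).mpr ⟨hp, inferInstance⟩)
    simp only [SimpleGraph.Preconnected, not_forall] at hnp
    obtain ⟨u, v, huv⟩ := hnp
    obtain ⟨p⟩ := hG.preconnected ↑u ↑v
    obtain ⟨w, hw, a', b', hwa, hwb, hnr⟩ := exists_connector hvc p.length u.2 v.2 p le_rfl huv
    set X' : Set V := insert w X with hX'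
    have hXX' : X ⊆ X' := Set.subset_insert w X
    have hvc' : _root_.IsVertexCover G X' := fun p q h => (hvc h).imp (hXX' ·) (hXX' ·)
    let φ : (G.induce X) →g (G.induce X') := ⟨fun p => ⟨↑p, hXX' p.2⟩, fun {p q} h => h⟩
    let F : (G.induce X).ConnectedComponent → (G.induce X').ConnectedComponent :=
      fun K => K.map φ
    have hwX' : w ∈ X' := Set.mem_insert w X
    have hsurj : Function.Surjective F := by
      intro K
      obtain ⟨y, rfl⟩ := K.exists_rep
      rcases Set.mem_insert_iff.mp y.2 with h1 | h2
      · refine ⟨(G.induce X).connectedComponentMk a', ?_⟩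
        have h3 : (G.induce X').Adj ⟨↑a', hXX' a'.2⟩ y := by
          show G.Adj ↑a' ↑y
          rw [h1]; exact hwa.symm
        exact (ConnectedComponent.map_mk φ a').trans (ConnectedComponent.connectedComponentMk_eq_of_adj h3)
      · exact ⟨(G.induce X).connectedComponentMk ⟨↑y, h2⟩,
          (ConnectedComponent.map_mk φ _).trans (congrArg _ (Subtype.ext rfl))⟩
    have h5 : F ((G.induce X).connectedComponentMk a') =
        F ((G.induce X).connectedComponentMk b') := by
      have e1 : (G.induce X').Adj ⟨w, hwX'⟩ (φ a') := hwa
      have e2 : (G.induce X').Adj ⟨w, hwX'⟩ (φ b') := hwb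
      simp only [F, ConnectedComponent.map_mk]
      exact (ConnectedComponent.connectedComponentMk_eq_of_adj e1).symm.trans (ConnectedComponent.connectedComponentMk_eq_of_adj e2)
    have hninj : ¬ Function.Injective F := fun hinj => hnr (ConnectedComponent.exact (hinj h5))
    haveI : Fintype (G.induce X).ConnectedComponent := Fintype.ofFinite _
    haveI : Fintype (G.induce X').ConnectedComponent := Fintype.ofFinite _
    have hlt : Nat.card (G.induce X').ConnectedComponent <
        Nat.card (G.induce X).ConnectedComponent := by
      rw [Nat.card_eq_fintype_card, Nat.card_eq_fintype_card]
      exact Fintype.card_lt_of_surjective_not_injective F hsurj hninj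
    obtain ⟨T, hT1, hT2, hT3, hT4⟩ := ih X' hvc' (hne.mono hXX') (by omega)
    refine ⟨T, hXX'.trans hT1, hT2, hT3, ?_⟩
    have : X'.ncard = X.ncard + 1 := Set.ncard_insert_of_notMem hw
    omega

/-- Let G be a finite simple connected graph with at least one edge, k ≥ 1,
and S ⊆ V(G) with |S| ≤ k such that every connected component of G − S is a clique (any
two distinct reachable vertices of G − S are adjacent). With c = Σ (|C_i| − 1) over the
components C_i of G − S having at least 2 vertices (components of size 1 contribute 0 to
the sum below), G has a connected vertex cover of size at most 2k − 1 + c. -/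
theorem stmt_14 {V : Type*} [Fintype V] [DecidableEq V]
    (G : SimpleGraph V) (hconn : G.Connected) (hedge : G.edgeSet.Nonempty)
    (k : ℕ) (hk : 1 ≤ k) (S : Set V) (hS : S.ncard ≤ k)
    (hcluster : ∀ a b : ↥(Sᶜ), (G.induce Sᶜ).Reachable a b → a ≠ b →
      (G.induce Sᶜ).Adj a b)
    (c : ℕ)
    (hc : c = ∑ᶠ comp : (G.induce Sᶜ).ConnectedComponent, (comp.supp.ncard - 1)) :
    ∃ T : Set V, IsConnectedVertexCover G T ∧ T.ncard ≤ 2 * k - 1 + c := by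
  classical
  -- choice of a vertex in each component with an S-neighbour (when S is nonempty)
  have hu_ex : ∀ K : (G.induce Sᶜ).ConnectedComponent, ∃ u : ↥(Sᶜ),
      (G.induce Sᶜ).connectedComponentMk u = K ∧ (S.Nonempty → ∃ s ∈ S, G.Adj ↑u s) := by
    intro K
    obtain ⟨x, hx⟩ := K.exists_rep
    by_cases hSne : S.Nonempty
    · obtain ⟨s0, hs0⟩ := hSne
      obtain ⟨p⟩ := hconn.preconnected ↑x s0
      obtain ⟨y, hy1, hy2⟩ := exists_adj_set p.length x.2 hs0 p le_rfl
      refine ⟨y, ?_, fun _ => hy1⟩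
      rw [← hx]
      exact (ConnectedComponent.sound hy2).symm
    · exact ⟨x, hx, fun h => absurd h hSne⟩
  set u : (G.induce Sᶜ).ConnectedComponent → ↥(Sᶜ) := fun K => (hu_ex K).choose with hu_def
  have hu1 : ∀ K, (G.induce Sᶜ).connectedComponentMk (u K) = K := fun K => (hu_ex K).choose_spec.1
  have hu2 : ∀ K, S.Nonempty → ∃ s ∈ S, G.Adj ↑(u K) s := fun K => (hu_ex K).choose_spec.2
  set v : (G.induce Sᶜ).ConnectedComponent → ↥(Sᶜ) := fun K =>
    if h : ∃ w : ↥(Sᶜ), (G.induce Sᶜ).connectedComponentMk w = K ∧ w ≠ u K then h.choose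
    else u K with hv_def
  have hv1 : ∀ K, (G.induce Sᶜ).connectedComponentMk (v K) = K := by
    intro K
    rw [hv_def]
    dsimp only
    split_ifs with h
    · exact h.choose_spec.1
    · exact hu1 K
  have hvinj : Function.Injective v := fun K1 K2 h => by rw [← hv1 K1, ← hv1 K2, h]
  have hv3 : ∀ (x : ↥(Sᶜ)) K, (G.induce Sᶜ).connectedComponentMk x = K → x ≠ v K →
      u K ≠ v K := by
    intro x K hxK hxv
    have hv_eq : v K = if h : ∃ w : ↥(Sᶜ), (G.induce Sᶜ).connectedComponentMk w = K ∧ w ≠ u K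
        then h.choose else u K := rfl
    rw [hv_eq] at hxv ⊢
    split_ifs at hxv ⊢ with h
    · exact fun he => h.choose_spec.2 he.symm
    · exact absurd ⟨x, hxK, hxv⟩ h
  set T0 : Set V := Set.univ \ Set.range (fun K => (↑(v K) : V)) with hT0_def
  have hT0S : S ⊆ T0 := by
    intro s hs
    refine ⟨trivial, ?_⟩
    rintro ⟨K, hK⟩
    have hK' : (↑(v K) : V) = s := hK
    exact (v K).2 (hK' ▸ hs)
  have hT0mem : ∀ x : V, x ∈ T0 ↔ ∀ K, (↑(v K) : V) ≠ x := by
    intro x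
    simp [hT0_def, Set.mem_diff, not_exists]
  -- the kept witness u K stays in T0 whenever some other vertex of K is in T0
  have hkey : ∀ (x : ↥(Sᶜ)), (↑x : V) ∈ T0 →
      (↑(u ((G.induce Sᶜ).connectedComponentMk x)) : V) ∈ T0 := by
    intro x hx
    set K := (G.induce Sᶜ).connectedComponentMk x with hK
    have hxv : x ≠ v K := by
      intro he
      exact ((hT0mem ↑x).mp hx K) (by rw [he])
    have huv := hv3 x K rfl hxv
    rw [hT0mem]
    intro K' hK'
    have h1 : v K' = u K := Subtype.ext hK'
    have h2 : K' = K := by rw [← hv1 K', h1, hu1 K]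
    exact huv (h2 ▸ h1).symm
  have hT0vc : _root_.IsVertexCover G T0 := by
    intro a b hab
    by_contra hcon
    push_neg at hcon
    obtain ⟨ha, hb⟩ := hcon
    simp only [hT0_def, Set.mem_diff, Set.mem_univ, true_and, not_not] at ha hb
    obtain ⟨K1, hK1⟩ := ha
    obtain ⟨K2, hK2⟩ := hb
    have hK1' : (↑(v K1) : V) = a := hK1
    have hK2' : (↑(v K2) : V) = b := hK2
    have hadjH : (G.induce Sᶜ).Adj (v K1) (v K2) := by
      show G.Adj ↑(v K1) ↑(v K2)
      rw [hK1', hK2']; exact hab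
    have hKK : K1 = K2 := by
      rw [← hv1 K1, ← hv1 K2]
      exact ConnectedComponent.connectedComponentMk_eq_of_adj hadjH
    rw [← hK1', ← hK2', hKK] at hab
    exact hab.ne rfl
  obtain ⟨a0, b0, hab0⟩ : ∃ a b, G.Adj a b := by
    obtain ⟨e, he⟩ := hedge
    revert he
    refine e.ind ?_
    intro a b he
    exact ⟨a, b, he⟩
  have hT0ne : T0.Nonempty := (hT0vc hab0).elim (fun h => ⟨a0, h⟩) (fun h => ⟨b0, h⟩)
  -- the number of components of the induced graph on T0 is at most k
  have hcomp_le : Nat.card (G.induce T0).ConnectedComponent ≤ k := by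
    by_cases hSne : S.Nonempty
    · have hg : ∀ K : (G.induce T0).ConnectedComponent, ∃ s : V, ∃ (hs : s ∈ S) (hT : s ∈ T0),
          (G.induce T0).connectedComponentMk ⟨s, hT⟩ = K := by
        intro K
        obtain ⟨x, hx⟩ := K.exists_rep
        by_cases hxS : (↑x : V) ∈ S
        · exact ⟨↑x, hxS, x.2, hx⟩
        · have hxc : (↑x : V) ∈ Sᶜ := hxS
          have hxT : (↑x : V) ∈ T0 := x.2
          have huT : (↑(u ((G.induce Sᶜ).connectedComponentMk ⟨↑x, hxc⟩)) : V) ∈ T0 :=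
            hkey ⟨↑x, hxc⟩ hxT
          set K0 := (G.induce Sᶜ).connectedComponentMk ⟨↑x, hxc⟩ with hK0
          obtain ⟨s, hsS, hadjs⟩ := hu2 K0 hSne
          have hsT : s ∈ T0 := hT0S hsS
          have r1 : (G.induce T0).Reachable x ⟨↑(u K0), huT⟩ := by
            by_cases hxu : (↑x : V) = ↑(u K0)
            · have : x = (⟨↑(u K0), huT⟩ : ↥T0) := Subtype.ext hxu
              rw [this]
            · have hHadj : (G.induce Sᶜ).Adj ⟨↑x, hxc⟩ (u K0) :=
                hcluster _ _ (ConnectedComponent.exact (hu1 K0)).symm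
                  (fun he => hxu (congrArg (Subtype.val : ↥(Sᶜ) → V) he))
              have : (G.induce T0).Adj x ⟨↑(u K0), huT⟩ := hHadj
              exact this.reachable
          have r2 : (G.induce T0).Adj ⟨↑(u K0), huT⟩ ⟨s, hsT⟩ := hadjs
          refine ⟨s, hsS, hsT, ?_⟩
          rw [← hx]
          exact (ConnectedComponent.sound (r1.trans r2.reachable)).symm
      set g : (G.induce T0).ConnectedComponent → ↥S :=
        fun K => ⟨(hg K).choose, (hg K).choose_spec.choose⟩ with hgdef
      have hginj : Function.Injective g := by
        intro K1 K2 he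
        have e1 := (hg K1).choose_spec.choose_spec.choose_spec
        have e2 := (hg K2).choose_spec.choose_spec.choose_spec
        have hval : (hg K1).choose = (hg K2).choose := congrArg Subtype.val he
        rw [← e1, ← e2]
        congr 1
        exact Subtype.ext hval
      calc Nat.card (G.induce T0).ConnectedComponent ≤ Nat.card ↥S :=
            Nat.card_le_card_of_injective g hginj
        _ = S.ncard := Nat.card_coe_set_eq S
        _ ≤ k := hS
    · rw [Set.not_nonempty_iff_eq_empty] at hSne
      have hallc : ∀ z : V, z ∈ Sᶜ := by intro z; rw [hSne]; exact Set.notMem_empty z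
      have hall : ∀ x y : ↥T0,
          (G.induce T0).connectedComponentMk x = (G.induce T0).connectedComponentMk y := by
        intro x y
        by_cases hxy : (↑x : V) = ↑y
        · congr 1; exact Subtype.ext hxy
        · obtain ⟨p⟩ := hconn.preconnected ↑x ↑y
          have hr : (G.induce Sᶜ).Reachable ⟨↑x, hallc _⟩ ⟨↑y, hallc _⟩ :=
            reach_induce_of_walk p (fun z _ => hallc z) _ _
          have hadjH := hcluster _ _ hr (fun he => hxy (congrArg (Subtype.val : ↥(Sᶜ) → V) he))
          have : (G.induce T0).Adj x y := (hadjH : G.Adj ↑x ↑y)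
          exact ConnectedComponent.connectedComponentMk_eq_of_adj this
      haveI : Subsingleton ((G.induce T0).ConnectedComponent) := by
        constructor
        intro K1 K2
        obtain ⟨x, rfl⟩ := K1.exists_rep
        obtain ⟨y, rfl⟩ := K2.exists_rep
        exact hall x y
      haveI : Fintype (G.induce T0).ConnectedComponent := Fintype.ofFinite _
      rw [Nat.card_eq_fintype_card]
      exact le_trans (Fintype.card_le_one_iff_subsingleton.mpr inferInstance) hk
  -- the size of T0 is at most |S| + c
  have hsize : T0.ncard ≤ S.ncard + c := by
    haveI : Fintype (G.induce Sᶜ).ConnectedComponent := Fintype.ofFinite _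
    set m := Fintype.card (G.induce Sᶜ).ConnectedComponent with hm
    have h1 : ∀ K : (G.induce Sᶜ).ConnectedComponent, 1 ≤ K.supp.ncard := by
      intro K
      obtain ⟨x, hx⟩ := K.exists_rep
      have hmem : x ∈ K.supp := hx
      have hpos := (Set.ncard_pos (Set.toFinite _)).mpr ⟨x, hmem⟩
      omega
    have h2 : c + m = Nat.card ↥(Sᶜ) := by
      rw [hc, finsum_eq_sum_of_fintype]
      have hW : Nat.card ↥(Sᶜ) = ∑ K : (G.induce Sᶜ).ConnectedComponent, K.supp.ncard := by
        rw [Nat.card_eq_fintype_card, ← Finset.card_univ,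
          Finset.card_eq_sum_card_fiberwise
            (f := (G.induce Sᶜ).connectedComponentMk) (t := Finset.univ)
            (fun x _ => Finset.mem_univ _)]
        refine Finset.sum_congr rfl ?_
        intro K _
        rw [Set.ncard_eq_toFinset_card']
        congr 1
        ext x
        simp [ConnectedComponent.mem_supp_iff]
      rw [hW]
      have hm1 : m = ∑ _K : (G.induce Sᶜ).ConnectedComponent, 1 := by simp [hm]
      rw [hm1, ← Finset.sum_add_distrib]
      exact Finset.sum_congr rfl fun K _ => Nat.sub_add_cancel (h1 K)
    have hrange : Set.range (fun K => (↑(v K) : V)) ⊆ Sᶜ := by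
      rintro _ ⟨K, rfl⟩; exact (v K).2
    have hT0eq : T0 = S ∪ (Sᶜ \ Set.range (fun K => (↑(v K) : V))) := by
      rw [hT0_def]
      ext x
      simp only [Set.mem_diff, Set.mem_univ, true_and, Set.mem_union, Set.mem_compl_iff]
      constructor
      · intro hx
        by_cases hxS : x ∈ S
        · exact Or.inl hxS
        · exact Or.inr ⟨hxS, hx⟩
      · rintro (hxS | ⟨-, hx⟩)
        · intro hr; exact (hrange hr) hxS
        · exact hx
    have himg : Sᶜ \ Set.range (fun K => (↑(v K) : V)) =
        Subtype.val '' ((Set.univ : Set ↥(Sᶜ)) \ Set.range v) := by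
      ext x
      constructor
      · rintro ⟨hx1, hx2⟩
        refine ⟨⟨x, hx1⟩, ⟨trivial, ?_⟩, rfl⟩
        rintro ⟨K, hK⟩
        exact hx2 ⟨K, congrArg (Subtype.val : ↥(Sᶜ) → V) hK⟩
      · rintro ⟨y, ⟨-, hy⟩, rfl⟩
        refine ⟨y.2, ?_⟩
        rintro ⟨K, hK⟩
        exact hy ⟨K, Subtype.ext hK⟩
    have hcard2 : (Sᶜ \ Set.range (fun K => (↑(v K) : V))).ncard = Nat.card ↥(Sᶜ) - m := by
      rw [himg, Set.ncard_image_of_injective _ Subtype.val_injective,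
        Set.ncard_diff (Set.subset_univ _), Set.ncard_univ]
      congr 1
      rw [← Set.image_univ, Set.ncard_image_of_injective _ hvinj, Set.ncard_univ,
        Nat.card_eq_fintype_card]
    calc T0.ncard ≤ S.ncard + (Sᶜ \ Set.range (fun K => (↑(v K) : V))).ncard := by
          rw [hT0eq]; exact Set.ncard_union_le _ _
      _ = S.ncard + c := by rw [hcard2]; omega
  obtain ⟨T, hT0T, hTvc, hTconn, hTcard⟩ := extend_to_connected hconn (k-1) T0 hT0vc hT0ne (by
    rw [Nat.sub_add_cancel hk]; exact hcomp_le)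
  exact ⟨T, ⟨hTvc, hTconn⟩, by omega⟩
end

section
/- Let G be a finite simple connected graph, let k ≥ 1 be an integer, and let S ⊆ V(G) with |S| ≤ k be such that every connected component of G − S is a clique. Suppose x ∈ S has at least 2k neighbours v such that v ∉ S and {v} is a connected component of G − S (i.e., v is an isolated vertex of G − S). Then every minimum-size connected vertex cover of G contains x. -/
/-- Let G be a finite simple connected graph, k ≥ 1, and S ⊆ V(G) with
|S| ≤ k such that every connected component of G − S is a clique. Suppose x ∈ S has at
least 2k neighbours v with v ∉ S that are isolated vertices of G − S (i.e. {v} is a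
connected component of G − S). Then every minimum-size connected vertex cover of G
contains x. -/
theorem stmt_15 {V : Type*} [Fintype V] [DecidableEq V]
    (G : SimpleGraph V) (hconn : G.Connected)
    (k : ℕ) (hk : 1 ≤ k) (S : Set V) (hS : S.ncard ≤ k)
    (hcluster : ∀ a b : ↥(Sᶜ), (G.induce Sᶜ).Reachable a b → a ≠ b →
      (G.induce Sᶜ).Adj a b)
    (x : V) (hx : x ∈ S)
    (hmany : 2 * k ≤
      {v : V | v ∉ S ∧ G.Adj x v ∧ ∀ w : V, w ∉ S → ¬ G.Adj v w}.ncard)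
    (T : Set V) (hT : IsConnectedVertexCover G T)
    (hmin : ∀ T' : Set V, IsConnectedVertexCover G T' → T.ncard ≤ T'.ncard) :
    x ∈ T := by
  by_contra hxT
  set A : Set V := {v : V | v ∉ S ∧ G.Adj x v ∧ ∀ w : V, w ∉ S → ¬ G.Adj v w} with hAdef
  have hAT : A ⊆ T := fun v hv => (hT.1 hv.2.1).resolve_left hxT
  have hAne : A.Nonempty := Set.nonempty_of_ncard_ne_zero (by omega)
  obtain ⟨a0, ha0⟩ := hAne
  have ha0T : a0 ∈ T := hAT ha0
  set W : Set V := T ∪ S with hWdef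
  have hTW : T ⊆ W := Set.subset_union_left
  have hSW : S ⊆ W := Set.subset_union_right
  have hxW : x ∈ W := hSW hx
  -- the induced graph on W is connected
  have hreachW : ∀ v (hv : v ∈ W),
      (G.induce W).Reachable ⟨v, hv⟩ ⟨a0, hTW ha0T⟩ := by
    have hmap : ∀ (a b : V) (ha : a ∈ T) (hb : b ∈ T),
        (G.induce W).Reachable ⟨a, hTW ha⟩ ⟨b, hTW hb⟩ := by
      intro a b ha hb
      have := hT.2.preconnected ⟨a, ha⟩ ⟨b, hb⟩
      exact this.map (SimpleGraph.induceHomOfLE G hTW).toHom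
    intro v hv
    by_cases hvT : v ∈ T
    · exact hmap v a0 hvT ha0T
    · have hvS : v ∈ S := hv.resolve_left hvT
      have hva : v ≠ a0 := fun h => hvT (h ▸ ha0T)
      obtain ⟨pw⟩ := hconn.preconnected v a0
      obtain ⟨u, hadj, q, -⟩ := SimpleGraph.Walk.exists_eq_cons_of_ne hva pw
      have huT : u ∈ T := (hT.1 hadj).resolve_left hvT
      have hstep : (G.induce W).Adj ⟨v, hv⟩ ⟨u, hTW huT⟩ := hadj
      exact hstep.reachable.trans (hmap u a0 huT ha0T)
  have hWconn : (G.induce W).Connected := by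
    haveI : Nonempty ↥W := ⟨⟨x, hxW⟩⟩
    refine ⟨fun a b => ?_⟩
    exact (hreachW a.1 a.2).trans (hreachW b.1 b.2).symm
  set r : ↥W := ⟨x, hxW⟩ with hrdef
  -- BFS parent function
  have hpar : ∀ v : ↥W, ∃ u : ↥W, v ≠ r →
      (G.induce W).Adj u v ∧ (G.induce W).dist r u < (G.induce W).dist r v := by
    intro v
    by_cases hvr : v = r
    · exact ⟨r, fun h => absurd hvr h⟩
    · obtain ⟨pw, hp⟩ := hWconn.exists_walk_length_eq_dist v r
      obtain ⟨u, hadj, q, hq⟩ := SimpleGraph.Walk.exists_eq_cons_of_ne hvr pw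
      refine ⟨u, fun _ => ⟨hadj.symm, ?_⟩⟩
      have h1 : (G.induce W).dist r u ≤ q.length := by
        rw [SimpleGraph.dist_comm]; exact SimpleGraph.dist_le q
      have h2 : pw.length = q.length + 1 := by
        rw [hq, SimpleGraph.Walk.length_cons]
      have h3 : (G.induce W).dist r v = (G.induce W).dist v r :=
        SimpleGraph.dist_comm ..
      omega
  choose p hp using hpar
  set Bad : Set V := {a | a ∈ A ∧ ∀ v : ↥W, v ≠ r → (p v : V) ≠ a} with hBdef
  have hBadA : Bad ⊆ A := fun a ha => ha.1
  have hBadW : Bad ⊆ W := fun a ha => hTW (hAT ha.1)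
  set T' : Set V := W \ Bad with hT'def
  have hT'W : T' ⊆ W := Set.diff_subset
  have hxT' : x ∈ T' := ⟨hxW, fun hb => hb.1.1 hx⟩
  -- T' is a vertex cover
  have hvc : IsVertexCover G T' := by
    have main : ∀ (u v : V), G.Adj u v → u ∈ T → u ∈ T' ∨ v ∈ T' := by
      intro u v huv hu
      by_cases hb : u ∈ Bad
      · right
        have hvS : v ∈ S := by
          by_contra hvS
          exact hb.1.2.2 v hvS huv
        exact ⟨hSW hvS, fun hb' => hb'.1.1 hvS⟩
      · exact Or.inl ⟨hTW hu, hb⟩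
    intro u v huv
    rcases hT.1 huv with hu | hv
    · exact main u v huv hu
    · exact (main v u huv.symm hv).symm
  -- T' is connected
  have key : ∀ n (v : V) (hv : v ∈ T'),
      (G.induce W).dist r ⟨v, hT'W hv⟩ ≤ n →
      (G.induce T').Reachable ⟨x, hxT'⟩ ⟨v, hv⟩ := by
    intro n
    induction n with
    | zero =>
      intro v hv hd
      have h0 : (G.induce W).dist r ⟨v, hT'W hv⟩ = 0 := Nat.le_zero.mp hd
      have : r = (⟨v, hT'W hv⟩ : ↥W) :=
        (hWconn.preconnected r ⟨v, hT'W hv⟩).dist_eq_zero_iff.mp h0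
      have hvx : x = v := congrArg Subtype.val this
      subst hvx
      exact SimpleGraph.Reachable.refl _
    | succ n ih =>
      intro v hv hd
      by_cases hvx : v = x
      · subst hvx
        exact SimpleGraph.Reachable.refl _
      · have hne : (⟨v, hT'W hv⟩ : ↥W) ≠ r := fun h => hvx (congrArg Subtype.val h)
        obtain ⟨hadj, hlt⟩ := hp ⟨v, hT'W hv⟩ hne
        set u : ↥W := p ⟨v, hT'W hv⟩ with hudef
        have huT' : (u : V) ∈ T' := ⟨u.2, fun hb => hb.2 ⟨v, hT'W hv⟩ hne rfl⟩
        have hru : (G.induce W).dist r ⟨(u : V), hT'W huT'⟩ ≤ n := by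
          have : (⟨(u : V), hT'W huT'⟩ : ↥W) = u := Subtype.ext rfl
          rw [this]; omega
        have h1 := ih (u : V) huT' hru
        have hstep : (G.induce T').Adj ⟨(u : V), huT'⟩ ⟨v, hv⟩ := hadj
        exact h1.trans hstep.reachable
  have hT'conn : (G.induce T').Connected := by
    haveI : Nonempty ↥T' := ⟨⟨x, hxT'⟩⟩
    refine ⟨fun a b => ?_⟩
    exact (key _ a.1 a.2 le_rfl).symm.trans (key _ b.1 b.2 le_rfl)
  -- counting: the parent A-vertices inject into S \ {x}
  have hex : ∀ a ∈ A \ Bad, ∃ v : ↥W, v ≠ r ∧ (p v : V) = a := by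
    rintro a ⟨haA, haB⟩
    by_contra h
    push_neg at h
    exact haB ⟨haA, fun v hv => h v hv⟩
  choose f hf using hex
  have hinj : (A \ Bad).ncard ≤ (S \ {x}).ncard := by
    classical
    set g : V → V := fun a => if h : a ∈ A \ Bad then (f a h : V) else x with hgdef
    apply Set.ncard_le_ncard_of_injOn g
    · intro a ha
      obtain ⟨hne, hpa⟩ := hf a ha
      obtain ⟨hadj, -⟩ := hp (f a ha) hne
      have hGadj : G.Adj (p (f a ha) : V) (f a ha : V) := hadj
      rw [hpa] at hGadj
      have hcS : (f a ha : V) ∈ S := by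
        by_contra hcS
        exact ha.1.2.2 _ hcS hGadj
      have hcx : (f a ha : V) ≠ x := fun h =>
        hne (Subtype.ext h)
      simp only [hgdef, dif_pos ha]
      exact ⟨hcS, hcx⟩
    · intro a ha b hb hab
      simp only [hgdef, dif_pos ha, dif_pos hb] at hab
      have : f a ha = f b hb := Subtype.ext hab
      have h1 := (hf a ha).2
      have h2 := (hf b hb).2
      rw [this] at h1
      rw [h2] at h1
      exact h1.symm
  have hABad : (A \ Bad).ncard + Bad.ncard = A.ncard :=
    Set.ncard_diff_add_ncard_of_subset hBadA
  have hSx : (S \ {x}).ncard + ({x} : Set V).ncard = S.ncard :=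
    Set.ncard_diff_add_ncard_of_subset (Set.singleton_subset_iff.mpr hx)
  rw [Set.ncard_singleton] at hSx
  have hWcard : W.ncard ≤ T.ncard + S.ncard := Set.ncard_union_le T S
  have hT'card : T'.ncard + Bad.ncard = W.ncard :=
    Set.ncard_diff_add_ncard_of_subset hBadW
  have hfin : T.ncard ≤ T'.ncard := hmin T' ⟨hvc, hT'conn⟩
  omega
end

section
/- Let G be a finite simple connected graph with at least one edge, let k ≥ 1 be an integer, let ε > 0 be a real number, and let S ⊆ V(G) with |S| ≤ k be such that every connected component of G − S is a clique. Let t be the number of connected components of G − S having at least 2 vertices. If ε · t ≥ 2k, then G has a connected vertex cover of size at most (1 + ε) · OPT, where OPT is the minimum size of a connected vertex cover of G. -/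
lemma reach_mono {V : Type*} (G : SimpleGraph V) {A B : Set V} (h : A ⊆ B) {a b : ↥A}
    (hr : (G.induce A).Reachable a b) :
    (G.induce B).Reachable ⟨a.1, h a.2⟩ ⟨b.1, h b.2⟩ := by
  let f : G.induce A →g G.induce B :=
    { toFun := fun x => ⟨x.1, h x.2⟩, map_rel' := fun hadj => hadj }
  exact hr.map f


/-- Let G be a finite simple connected graph with at least one edge, k ≥ 1
an integer, ε > 0 a real number, and S ⊆ V(G) with |S| ≤ k such that every connected
component of G − S is a clique. Let t be the number of connected components of G − S
having at least 2 vertices. If ε·t ≥ 2k, then G has a connected vertex cover of size at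
most (1 + ε)·OPT, where OPT is the minimum size of a connected vertex cover of G. -/
theorem stmt_16 {V : Type*} [Fintype V] [DecidableEq V]
    (G : SimpleGraph V) (hconn : G.Connected) (hedge : G.edgeSet.Nonempty)
    (k : ℕ) (hk : 1 ≤ k) (ε : ℝ) (hε : 0 < ε)
    (S : Set V) (hS : S.ncard ≤ k)
    (hcluster : ∀ a b : ↥(Sᶜ), (G.induce Sᶜ).Reachable a b → a ≠ b →
      (G.induce Sᶜ).Adj a b)
    (t : ℕ)
    (ht : t = Nat.card {comp : (G.induce Sᶜ).ConnectedComponent // 2 ≤ comp.supp.ncard})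
    (hεt : (2 * k : ℝ) ≤ ε * (t : ℝ)) :
    ∃ T : Set V, IsConnectedVertexCover G T ∧
      (T.ncard : ℝ) ≤ (1 + ε) *
        ((sInf {n : ℕ | ∃ D : Set V, IsConnectedVertexCover G D ∧ D.ncard = n} : ℕ) : ℝ) := by
  classical
  set P := {n : ℕ | ∃ D : Set V, IsConnectedVertexCover G D ∧ D.ncard = n} with hP
  have huniv : IsConnectedVertexCover G (Set.univ : Set V) := by
    refine ⟨fun u v _ => Or.inl trivial, ?_⟩
    rw [(SimpleGraph.induceUnivIso G).connected_iff]
    exact hconn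
  have hPne : P.Nonempty := ⟨_, Set.univ, huniv, rfl⟩
  obtain ⟨D, hD, hDcard⟩ := Nat.sInf_mem hPne
  -- every vertex has a neighbor
  have hnbr : ∀ v : V, ∃ w, G.Adj v w := by
    intro v
    obtain ⟨e, he⟩ := hedge
    induction e with
    | h a b =>
      rcases eq_or_ne v a with rfl | hva
      · exact ⟨b, he⟩
      obtain ⟨p⟩ := hconn.preconnected v a
      cases p with
      | nil => exact absurd rfl hva
      | cons h _ => exact ⟨_, h⟩
  -- D ∪ S is a connected vertex cover
  have hDsub : D ⊆ D ∪ S := Set.subset_union_left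
  have hDne : D.Nonempty := by
    obtain ⟨x⟩ := hD.2.nonempty
    exact ⟨x.1, x.2⟩
  obtain ⟨d0, hd0⟩ := hDne
  have hreachD : ∀ x : ↥(D ∪ S), ∃ y : ↥(D ∪ S), y.1 ∈ D ∧
      (G.induce (D ∪ S)).Reachable x y := by
    rintro ⟨x, hx⟩
    by_cases hxD : x ∈ D
    · exact ⟨⟨x, hx⟩, hxD, SimpleGraph.Reachable.refl _⟩
    · obtain ⟨w, hw⟩ := hnbr x
      have hwD : w ∈ D := (hD.1 hw).resolve_left hxD
      refine ⟨⟨w, Or.inl hwD⟩, hwD, SimpleGraph.Adj.reachable ?_⟩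
      exact hw
  have hTconn : (G.induce (D ∪ S)).Connected := by
    rw [SimpleGraph.connected_iff]
    refine ⟨fun a b => ?_, ⟨⟨d0, Or.inl hd0⟩⟩⟩
    obtain ⟨ya, hyaD, hra⟩ := hreachD a
    obtain ⟨yb, hybD, hrb⟩ := hreachD b
    have : (G.induce D).Reachable ⟨ya.1, hyaD⟩ ⟨yb.1, hybD⟩ :=
      hD.2.preconnected _ _
    have h2 := reach_mono G hDsub this
    exact hra.trans (h2.trans hrb.symm)
  have hTcvc : IsConnectedVertexCover G (D ∪ S) :=
    ⟨fun u v huv => (hD.1 huv).imp (fun h => Or.inl h) (fun h => Or.inl h), hTconn⟩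
  -- t ≤ D.ncard
  have htle : t ≤ D.ncard := by
    have hchoice : ∀ c : {comp : (G.induce Sᶜ).ConnectedComponent // 2 ≤ comp.supp.ncard},
        ∃ v : ↥(Sᶜ), v ∈ c.1.supp ∧ v.1 ∈ D := by
      rintro ⟨c, hc⟩
      have h2 : 1 < c.supp.ncard := hc
      rw [Set.one_lt_ncard_iff] at h2
      obtain ⟨a, b, ha, hb, hab⟩ := h2
      have hr : (G.induce Sᶜ).Reachable a b := by
        rw [SimpleGraph.ConnectedComponent.mem_supp_iff] at ha hb
        exact SimpleGraph.ConnectedComponent.exact (ha.trans hb.symm)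
      have hadj := hcluster a b hr hab
      have : G.Adj a.1 b.1 := hadj
      rcases hD.1 this with h | h
      · exact ⟨a, ha, h⟩
      · exact ⟨b, hb, h⟩
    choose f hf1 hf2 using hchoice
    have hinj : Function.Injective (fun c => (⟨(f c).1, hf2 c⟩ : ↥D)) := by
      intro c1 c2 hEq
      simp only [Subtype.mk.injEq] at hEq
      have : f c1 = f c2 := Subtype.ext hEq
      have h1 := hf1 c1
      have h2 := hf1 c2
      rw [this] at h1
      rw [SimpleGraph.ConnectedComponent.mem_supp_iff] at h1 h2
      exact Subtype.ext (h1.symm.trans h2 : c1.1 = c2.1)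
    calc t = Nat.card {comp : (G.induce Sᶜ).ConnectedComponent // 2 ≤ comp.supp.ncard} := ht
      _ ≤ Nat.card ↥D := Nat.card_le_card_of_injective _ hinj
      _ = D.ncard := Nat.card_coe_set_eq D
  -- arithmetic
  refine ⟨D ∪ S, hTcvc, ?_⟩
  have hcard : (D ∪ S).ncard ≤ D.ncard + k :=
    le_trans (Set.ncard_union_le D S) (by omega)
  have hOPT : ((sInf P : ℕ) : ℝ) = (D.ncard : ℝ) := by rw [hDcard]
  have hkle : (k : ℝ) ≤ ε * (D.ncard : ℝ) := by
    have h0 : (0:ℝ) ≤ (k:ℝ) := Nat.cast_nonneg k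
    have h2 : ε * (t : ℝ) ≤ ε * (D.ncard : ℝ) := by
      apply mul_le_mul_of_nonneg_left _ hε.le
      exact_mod_cast htle
    linarith
  calc ((D ∪ S).ncard : ℝ) ≤ (D.ncard : ℝ) + k := by exact_mod_cast hcard
    _ ≤ (D.ncard : ℝ) + ε * D.ncard := by linarith
    _ = (1 + ε) * (D.ncard : ℝ) := by ring
    _ = (1 + ε) * ((sInf P : ℕ) : ℝ) := by rw [hOPT]
end
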